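/- arXiv:2512.10022 — 6 statements merged into one kernel-verified Lean document; each statement's English description precedes it below -/
import Mathlib

section
/- Let K = (E, λ) dominate K₀ = (E₀, λ₀) (i.e., E₀ ⊆ E and λ₀(X) ≤ λ(X) for all X ⊆ E₀). If T₀ is a tangle of order k in K₀, then the collection T of all sets X ⊆ E with λ(X) < k and X ∩ E₀ ∈ T₀ is a tangle of order k in K. -/
open Set

variable {α : Type*} {V : Type*}

/-- An (unbundled) connectivity-system candidate: a ground set together with a
connectivity function on its subsets. -/
structure PreSys (α : Type*) where
  E : Set α
  lam : Set α → ℕ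

/-- `K` is a connectivity system: the ground set is finite and the connectivity
function is symmetric and submodular on subsets of the ground set. -/
def PreSys.IsConnSys (K : PreSys α) : Prop :=
  K.E.Finite ∧
  (∀ X ⊆ K.E, K.lam X = K.lam (K.E \ X)) ∧
  (∀ X ⊆ K.E, ∀ Y ⊆ K.E, K.lam (X ∩ Y) + K.lam (X ∪ Y) ≤ K.lam X + K.lam Y)

/-- A tangle of order `k` in a connectivity system. -/
def IsTangle (K : PreSys α) (k : ℕ) (T : Set (Set α)) : Prop :=
  (∀ A ∈ T, A ⊆ K.E ∧ K.lam A < k) ∧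
  (∀ A ⊆ K.E, K.lam A < k → (A ∈ T ↔ (K.E \ A) ∉ T)) ∧
  (∀ A ∈ T, ∀ B ∈ T, ∀ C ∈ T, A ∪ B ∪ C ≠ K.E) ∧
  (∀ A ∈ T, A.ncard ≠ K.E.ncard - 1)

/-- `K` dominates `K₀`. -/
def Dominates (K K₀ : PreSys α) : Prop :=
  K₀.E ⊆ K.E ∧ ∀ X ⊆ K₀.E, K₀.lam X ≤ K.lam X

/-- The collection of subsets of `K.E` of `K`-connectivity `< k` whose trace on
`K₀.E` lies in `T₀`; when `K` dominates `K₀` and `T₀` is a tangle, this is the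
tangle induced by `T₀` in `K`. -/
def InducedTangle (K K₀ : PreSys α) (k : ℕ) (T₀ : Set (Set α)) : Set (Set α) :=
  {X | X ⊆ K.E ∧ K.lam X < k ∧ X ∩ K₀.E ∈ T₀}

/-- `K₀` adheres to `K`. -/
def Adheres (K₀ K : PreSys α) : Prop :=
  Dominates K K₀ ∧
  ∀ A B : Set α, A ∪ B = K₀.E → Disjoint A B →
    ∃ X₁ X₂ : Set α, Disjoint X₁ X₂ ∧ (X₁ ∪ X₂ = A ∨ X₁ ∪ X₂ = B) ∧
      K.lam X₁ ≤ K₀.lam A ∧ K.lam X₂ ≤ K₀.lam A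

/-- The tangle `T` of order `k` in `K` splits in `K₀`: two distinct tangles of
order `k` in `K₀` both induce `T`. -/
def Splits (K K₀ : PreSys α) (k : ℕ) (T : Set (Set α)) : Prop :=
  ∃ T₁ T₂ : Set (Set α), T₁ ≠ T₂ ∧ IsTangle K₀ k T₁ ∧ IsTangle K₀ k T₂ ∧
    InducedTangle K K₀ k T₁ = T ∧ InducedTangle K K₀ k T₂ = T

/-- `K` is `k`-entangled: for each `t ≤ k` there is at most one tangle of order `t`. -/
def Entangled (K : PreSys α) (k : ℕ) : Prop :=
  ∀ t ≤ k, ∀ T₁ T₂ : Set (Set α), IsTangle K t T₁ → IsTangle K t T₂ → T₁ = T₂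

/-! ### Matroids -/

/-- The rank of a set in a matroid: the largest cardinality of an independent
subset of `X`. -/
noncomputable def mrank (M : Matroid α) (X : Set α) : ℕ :=
  sSup {n | ∃ I, M.Indep I ∧ I ⊆ X ∧ I.ncard = n}

/-- The connectivity function `λ_M(X) = r(X) + r(E \ X) - r(M) + 1` of a matroid. -/
noncomputable def lamM (M : Matroid α) (X : Set α) : ℕ :=
  mrank M X + mrank M (M.E \ X) - mrank M M.E + 1

/-- The connectivity function of the deletion `M \ e`, expressed via the rank
function of `M` (for `X ⊆ E(M) \ {e}` one has `r_{M\e}(X) = r_M(X)`). -/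
noncomputable def lamDel (M : Matroid α) (e : α) (X : Set α) : ℕ :=
  mrank M X + mrank M ((M.E \ {e}) \ X) - mrank M (M.E \ {e}) + 1

/-- The connectivity function of the contraction `M / e`, expressed via the rank
function of `M` (for `Y ⊆ E(M) \ {e}` one has `r_{M/e}(Y) = r_M(Y ∪ {e}) - r_M({e})`,
and `r(M/e) = r(M) - r_M({e})`). -/
noncomputable def lamCon (M : Matroid α) (e : α) (X : Set α) : ℕ :=
  mrank M (X ∪ {e}) + mrank M (((M.E \ {e}) \ X) ∪ {e}) - mrank M {e} - mrank M M.E + 1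

/-- The connectivity system `K(M)` of a matroid `M`. -/
noncomputable def KM (M : Matroid α) : PreSys α := ⟨M.E, lamM M⟩

/-- The connectivity system `K(M \ e)`. -/
noncomputable def KDel (M : Matroid α) (e : α) : PreSys α := ⟨M.E \ {e}, lamDel M e⟩

/-- The connectivity system `K(M / e)`. -/
noncomputable def KCon (M : Matroid α) (e : α) : PreSys α := ⟨M.E \ {e}, lamCon M e⟩

/-! ### Graphs, cut-rank and pivoting -/

/-- The cut-rank, relative to a ground set `S` of vertices, of a set `X`:
the GF(2)-rank of the adjacency submatrix with rows `X ∩ S` and columns `S \ X`.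
For an induced subgraph of `G` on `S` this is its cut-rank function. -/
noncomputable def cutRankOn (G : SimpleGraph V) [Fintype V] (S X : Set V) : ℕ :=
  letI : Fintype ↥(X ∩ S) := (Set.toFinite _).fintype
  letI : Fintype ↥(S \ X) := (Set.toFinite _).fintype
  letI : DecidableRel G.Adj := Classical.decRel _
  Matrix.rank (Matrix.of fun (a : ↥(X ∩ S)) (b : ↥(S \ X)) =>
    if G.Adj a.1 b.1 then (1 : ZMod 2) else 0)

/-- The cut-rank function `ρ_G` of a graph `G`. -/
noncomputable def cutRank (G : SimpleGraph V) [Fintype V] (X : Set V) : ℕ :=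
  cutRankOn G Set.univ X

/-- Local complementation at a vertex `v`: adjacency among the neighbours of `v`
is complemented. -/
def localComp (G : SimpleGraph V) (v : V) : SimpleGraph V where
  Adj a b := a ≠ b ∧
    ((G.Adj v a ∧ G.Adj v b ∧ ¬ G.Adj a b) ∨ (¬ (G.Adj v a ∧ G.Adj v b) ∧ G.Adj a b))
  symm := by
    constructor
    intro a b h
    obtain ⟨hab, h⟩ := h
    refine ⟨hab.symm, ?_⟩
    rcases h with ⟨h1, h2, h3⟩ | ⟨h1, h2⟩
    · exact Or.inl ⟨h2, h1, fun h => h3 h.symm⟩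
    · exact Or.inr ⟨fun h => h1 ⟨h.2, h.1⟩, h2.symm⟩
  loopless := ⟨fun a h => h.1 rfl⟩

/-- The pivot `G × e` on an edge `e = uv`, defined as `G * u * v * u` where `*`
denotes local complementation. -/
def pivot (G : SimpleGraph V) (u v : V) : SimpleGraph V :=
  localComp (localComp (localComp G u) v) u

/-- The connectivity system `CR(G) = (V(G), ρ_G)`. -/
noncomputable def CR (G : SimpleGraph V) [Fintype V] : PreSys V :=
  ⟨Set.univ, cutRank G⟩

/-- The connectivity system `CR(G - v)` of the graph obtained by deleting the
vertex `v`: ground set `V \ {v}` with the cut-rank computed inside `V \ {v}`. -/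
noncomputable def CRdel (G : SimpleGraph V) [Fintype V] (v : V) : PreSys V :=
  ⟨{v}ᶜ, cutRankOn G {v}ᶜ⟩

/-! ### Partial branch-decompositions -/

/-- A partial branch-decomposition of a connectivity system `K`: a cubic tree
(each vertex of degree 1 or 3) together with a map from the ground set to the
leaves of the tree. -/
structure PBD (K : PreSys α) (V : Type*) where
  tree : SimpleGraph V
  isTree : tree.IsTree
  cubic : ∀ x : V, (tree.neighborSet x).ncard = 1 ∨ (tree.neighborSet x).ncard = 3
  f : α → V
  maps : ∀ a ∈ K.E, (tree.neighborSet (f a)).ncard = 1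

/-- A leaf of the cubic tree of a partial branch-decomposition. -/
def PBD.IsLeaf {K : PreSys α} (D : PBD K V) (x : V) : Prop :=
  (D.tree.neighborSet x).ncard = 1

/-- The side of the edge `uw` of the tree `tr` towards `u`: the elements of the
ground set mapped by `f` into the component of `tr - uw` containing `u`. -/
def edgeSide (K : PreSys α) (tr : SimpleGraph V) (f : α → V) (u w : V) : Set α :=
  {a | a ∈ K.E ∧ (tr.deleteEdges {s(u, w)}).Reachable (f a) u}

/-- The partial branch-decomposition data `(tr, f)` has width at most `t`:
every edge of the tree induces a partition whose sides have connectivity at most `t`. -/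
def widthLE (K : PreSys α) (tr : SimpleGraph V) (f : α → V) (t : ℕ) : Prop :=
  ∀ u w : V, tr.Adj u w → K.lam (edgeSide K tr f u w) ≤ t

/-- The set displayed by the vertex `x`: the elements of the ground set mapped to `x`. -/
def display (K : PreSys α) (f : α → V) (x : V) : Set α :=
  {a | a ∈ K.E ∧ f a = x}

/-- `X` is weakly `t`-branched: `λ(X) ≤ t` and there is a partial
branch-decomposition of width at most `t` in which every leaf displays a subset
of `E \ X` or a singleton. -/
def WeaklyBranched (K : PreSys α) (X : Set α) (t : ℕ) : Prop :=
  K.lam X ≤ t ∧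
    ∃ (V : Type) (_ : Fintype V) (D : PBD K V), widthLE K D.tree D.f t ∧
      ∀ x : V, D.IsLeaf x →
        (display K D.f x ⊆ K.E \ X ∨ ∃ a : α, display K D.f x = {a})

/-- `X` is `t`-branched: there is a partial branch-decomposition of width at most
`t` in which some leaf displays `E \ X` and every other leaf displays at most one
element of `X`. -/
def Branched (K : PreSys α) (X : Set α) (t : ℕ) : Prop :=
  ∃ (V : Type) (_ : Fintype V) (D : PBD K V), widthLE K D.tree D.f t ∧
    ∃ r : V, D.IsLeaf r ∧ display K D.f r = K.E \ X ∧
      ∀ x : V, D.IsLeaf x → x ≠ r → (display K D.f x ∩ X).ncard ≤ 1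

/-- `κ_K(X, Y)`: the minimum connectivity of a set `Z` with `X ⊆ Z ⊆ E \ Y`. -/
noncomputable def kappa (K : PreSys α) (X Y : Set α) : ℕ :=
  sInf {n | ∃ Z : Set α, X ⊆ Z ∧ Z ⊆ K.E \ Y ∧ K.lam Z = n}

/-- If `K` dominates `K₀` (here, as in the application, the ground set of
`K₀` is obtained from that of `K` by removing a single element `e`) and `T₀` is a
tangle of order `k` in `K₀`, then the collection of all `X ⊆ E` with `λ(X) < k` and
`X ∩ E₀ ∈ T₀` is a tangle of order `k` in `K`. -/
theorem stmt1 {α : Type*} (K K₀ : PreSys α) (hK : K.IsConnSys) (hK₀ : K₀.IsConnSys)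
    (e : α) (he : e ∈ K.E) (hE : K₀.E = K.E \ {e})
    (hdom : Dominates K K₀) (k : ℕ) (T₀ : Set (Set α)) (hT₀ : IsTangle K₀ k T₀) :
    IsTangle K k (InducedTangle K K₀ k T₀) := by
  obtain ⟨hfin, hsym, hsub⟩ := hK
  obtain ⟨hfin₀, hsym₀, hsub₀⟩ := hK₀
  obtain ⟨hE₀sub, hle⟩ := hdom
  obtain ⟨hT1, hT2, hT3, hT4⟩ := hT₀
  -- complement of the trace
  have hcompl : ∀ A ⊆ K.E, K₀.E \ (A ∩ K₀.E) = (K.E \ A) ∩ K₀.E := by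
    intro A hA
    ext x
    simp only [mem_diff, mem_inter_iff]
    constructor
    · rintro ⟨hx, hx2⟩
      exact ⟨⟨hE₀sub hx, fun h => hx2 ⟨h, hx⟩⟩, hx⟩
    · rintro ⟨⟨_, hxA⟩, hx⟩
      exact ⟨hx, fun h => hxA h.1⟩
  -- the trace of a low-connectivity set has low connectivity in K₀
  have key : ∀ A ⊆ K.E, K.lam A < k → K₀.lam (A ∩ K₀.E) < k := by
    intro A hA hlam
    by_cases heA : e ∈ A
    · have h1 : K.E \ A ⊆ K₀.E := by
        rw [hE]
        rintro x ⟨hx1, hx2⟩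
        exact ⟨hx1, by rintro rfl; exact hx2 heA⟩
      have h2 : K₀.E \ (K.E \ A) = A ∩ K₀.E := by
        ext x
        rw [hE]
        simp only [mem_diff, mem_inter_iff, mem_singleton_iff]
        constructor
        · rintro ⟨⟨hxE, hxe⟩, hx2⟩
          refine ⟨?_, hxE, hxe⟩
          by_contra hxA
          exact hx2 ⟨hxE, hxA⟩
        · rintro ⟨hxA, hxE, hxe⟩
          exact ⟨⟨hxE, hxe⟩, fun h => h.2 hxA⟩
      calc K₀.lam (A ∩ K₀.E) = K₀.lam (K₀.E \ (K.E \ A)) := by rw [h2]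
        _ = K₀.lam (K.E \ A) := (hsym₀ _ h1).symm
        _ ≤ K.lam (K.E \ A) := hle _ h1
        _ = K.lam A := (hsym A hA).symm
        _ < k := hlam
    · have hAE₀ : A ⊆ K₀.E := by
        rw [hE]
        intro x hx
        exact ⟨hA hx, by rintro rfl; exact heA hx⟩
      rw [inter_eq_left.mpr hAE₀]
      exact lt_of_le_of_lt (hle A hAE₀) hlam
  refine ⟨?_, ?_, ?_, ?_⟩
  · rintro A ⟨hA1, hA2, _⟩
    exact ⟨hA1, hA2⟩
  · intro A hA hlam
    have hlamc : K.lam (K.E \ A) < k := by rw [← hsym A hA]; exact hlam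
    have hmem : A ∈ InducedTangle K K₀ k T₀ ↔ A ∩ K₀.E ∈ T₀ := by
      constructor
      · rintro ⟨_, _, h⟩; exact h
      · intro h; exact ⟨hA, hlam, h⟩
    have hmemc : K.E \ A ∈ InducedTangle K K₀ k T₀ ↔ (K.E \ A) ∩ K₀.E ∈ T₀ := by
      constructor
      · rintro ⟨_, _, h⟩; exact h
      · intro h; exact ⟨diff_subset, hlamc, h⟩
    rw [hmem, hmemc, ← hcompl A hA]
    exact hT2 _ inter_subset_right (key A hA hlam)
  · rintro A ⟨hA, hlamA, hA₀⟩ B ⟨hB, hlamB, hB₀⟩ C ⟨hC, hlamC, hC₀⟩ hunion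
    refine hT3 _ hA₀ _ hB₀ _ hC₀ ?_
    rw [← union_inter_distrib_right, ← union_inter_distrib_right, hunion,
      inter_eq_right.mpr hE₀sub]
  · rintro A ⟨hA, hlamA, hA₀⟩ hcard
    have hApos : 1 ≤ K.E.ncard := by
      have := (Set.ncard_pos hfin).mpr ⟨e, he⟩
      omega
    have hdiffcard : (K.E \ A).ncard = 1 := by
      rw [Set.ncard_diff hA (hfin.subset hA), hcard]
      omega
    obtain ⟨x, hx⟩ := Set.ncard_eq_one.mp hdiffcard
    have hAeq : A = K.E \ {x} := by
      rw [← hx, Set.diff_diff_cancel_left hA]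
    have hxE : x ∈ K.E := by
      have : x ∈ K.E \ A := hx ▸ rfl
      exact this.1
    by_cases hxe : x = e
    · -- A ∩ E₀ = E₀, contradiction with the third axiom for T₀
      have : A ∩ K₀.E = K₀.E := by
        rw [hAeq, hxe, hE, inter_eq_right.mpr Subset.rfl]
      rw [this] at hA₀
      exact hT3 _ hA₀ _ hA₀ _ hA₀ (by simp)
    · -- A ∩ E₀ = E₀ \ {x} has ncard |E₀| - 1
      have hxE₀ : x ∈ K₀.E := by rw [hE]; exact ⟨hxE, hxe⟩
      have hAE₀ : A ∩ K₀.E = K₀.E \ {x} := by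
        rw [hAeq, hE]
        ext y
        simp only [mem_inter_iff, mem_diff, mem_singleton_iff]
        tauto
      have hfinE₀ : K₀.E.Finite := hE ▸ hfin.diff
      have : (A ∩ K₀.E).ncard = K₀.E.ncard - 1 := by
        rw [hAE₀, Set.ncard_diff_singleton_of_mem hxE₀]
      exact hT4 _ hA₀ this
end

section
/- Let K₀ = (E₀, λ₀) adhere to K = (E, λ): K dominates K₀ and for each partition (A, B) of E₀ there is a partition (X₁, X₂) of A or of B with λ(X₁) ≤ λ₀(A) and λ(X₂) ≤ λ₀(A) (one of X₁, X₂ may be empty). Then no tangle of order k in K splits in K₀; that is, there do not exist two distinct tangles T₁, T₂ of order k in K₀ that both induce the same tangle T of order k in K. -/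
open Set

variable {α : Type*} {V : Type*}

/-- Key lemma: if two tangles in `K₀` both induce the tangle `T` in `K` and a set
`A` lies in the first but not the second, we get a contradiction. -/
lemma stmt2_key {α : Type*} (K K₀ : PreSys α) (hadh : Adheres K₀ K) (k : ℕ)
    (T T₁ T₂ : Set (Set α)) (hT : IsTangle K k T)
    (h₁ : IsTangle K₀ k T₁) (h₂ : IsTangle K₀ k T₂)
    (hi₁ : InducedTangle K K₀ k T₁ = T) (hi₂ : InducedTangle K K₀ k T₂ = T)
    (A : Set α) (hA1 : A ∈ T₁) (hA2 : A ∉ T₂) : False := by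
  obtain ⟨⟨hE₀E, _⟩, hadh2⟩ := hadh
  obtain ⟨hAsub, hAk⟩ := h₁.1 A hA1
  -- `E₀ \ A ∈ T₂`
  have hB2 : K₀.E \ A ∈ T₂ := by
    by_contra h
    exact hA2 ((h₂.2.1 A hAsub hAk).mpr h)
  -- both traces lemma
  have memor : ∀ X, X ⊆ K₀.E → K.lam X < k →
      (X ∈ T₁ ∧ X ∈ T₂) ∨ (K₀.E \ X ∈ T₁ ∧ K₀.E \ X ∈ T₂) := by
    intro X hXsub hXk
    have hXE : X ⊆ K.E := hXsub.trans hE₀E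
    have htrace : ∀ T', InducedTangle K K₀ k T' = T → ∀ Y ∈ T, Y ∩ K₀.E ∈ T' := by
      intro T' hT' Y hY
      rw [← hT'] at hY
      exact hY.2.2
    have hXE₀ : X ∩ K₀.E = X := Set.inter_eq_left.mpr hXsub
    have hCE₀ : (K.E \ X) ∩ K₀.E = K₀.E \ X := by
      ext a
      simp only [Set.mem_inter_iff, Set.mem_diff]
      exact ⟨fun ⟨⟨_, h2⟩, h3⟩ => ⟨h3, h2⟩, fun ⟨h1, h2⟩ => ⟨⟨hE₀E h1, h2⟩, h1⟩⟩
    by_cases hX : X ∈ T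
    · left
      constructor
      · have := htrace T₁ hi₁ X hX; rwa [hXE₀] at this
      · have := htrace T₂ hi₂ X hX; rwa [hXE₀] at this
    · have hcX : K.E \ X ∈ T := by
        by_contra h
        exact hX ((hT.2.1 X hXE hXk).mpr h)
      right
      constructor
      · have := htrace T₁ hi₁ _ hcX; rwa [hCE₀] at this
      · have := htrace T₂ hi₂ _ hcX; rwa [hCE₀] at this
  -- union helper
  have hun : ∀ C X : Set α, C ⊆ K₀.E → X ⊆ C → C ∪ C ∪ (K₀.E \ X) = K₀.E := by
    intro C X hC hXC
    apply Set.Subset.antisymm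
    · exact Set.union_subset (Set.union_subset hC hC) Set.diff_subset
    · intro a ha
      by_cases h : a ∈ X
      · exact Or.inl (Or.inl (hXC h))
      · exact Or.inr ⟨ha, h⟩
  -- adherence applied to the partition (A, E₀ \ A)
  obtain ⟨X₁, X₂, hdisj, hcase, hl1, hl2⟩ :=
    hadh2 A (K₀.E \ A) (Set.union_diff_cancel hAsub) Set.disjoint_sdiff_right
  have hl1k : K.lam X₁ < k := lt_of_le_of_lt hl1 hAk
  have hl2k : K.lam X₂ < k := lt_of_le_of_lt hl2 hAk
  rcases hcase with hu | hu
  · -- X₁ ∪ X₂ = A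
    have hX₁A : X₁ ⊆ A := hu ▸ Set.subset_union_left
    have hX₂A : X₂ ⊆ A := hu ▸ Set.subset_union_right
    rcases memor X₁ (hX₁A.trans hAsub) hl1k with ⟨_, m1⟩ | ⟨m1, _⟩
    · rcases memor X₂ (hX₂A.trans hAsub) hl2k with ⟨_, m2⟩ | ⟨m2, _⟩
      · -- X₁, X₂ ∈ T₂ and E₀ \ A ∈ T₂ cover E₀
        refine h₂.2.2.1 X₁ m1 X₂ m2 (K₀.E \ A) hB2 ?_
        rw [hu, Set.union_diff_cancel hAsub]
      · exact h₁.2.2.1 A hA1 A hA1 (K₀.E \ X₂) m2 (hun A X₂ hAsub hX₂A)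
    · exact h₁.2.2.1 A hA1 A hA1 (K₀.E \ X₁) m1 (hun A X₁ hAsub hX₁A)
  · -- X₁ ∪ X₂ = E₀ \ A
    have hBsub : K₀.E \ A ⊆ K₀.E := Set.diff_subset
    have hX₁B : X₁ ⊆ K₀.E \ A := hu ▸ Set.subset_union_left
    have hX₂B : X₂ ⊆ K₀.E \ A := hu ▸ Set.subset_union_right
    rcases memor X₁ (hX₁B.trans hBsub) hl1k with ⟨m1, _⟩ | ⟨_, m1⟩
    · rcases memor X₂ (hX₂B.trans hBsub) hl2k with ⟨m2, _⟩ | ⟨_, m2⟩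
      · refine h₁.2.2.1 X₁ m1 X₂ m2 A hA1 ?_
        rw [hu, Set.diff_union_of_subset hAsub]
      · exact h₂.2.2.1 _ hB2 _ hB2 (K₀.E \ X₂) m2 (hun _ X₂ hBsub hX₂B)
    · exact h₂.2.2.1 _ hB2 _ hB2 (K₀.E \ X₁) m1 (hun _ X₁ hBsub hX₁B)

/-- If `K₀` adheres to `K`, then no tangle of order `k` in `K`
splits in `K₀`. -/
theorem stmt2 {α : Type*} (K K₀ : PreSys α) (hK : K.IsConnSys) (hK₀ : K₀.IsConnSys)
    (hadh : Adheres K₀ K) (k : ℕ) (T : Set (Set α)) (hT : IsTangle K k T) :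
    ¬ Splits K K₀ k T := by
  rintro ⟨T₁, T₂, hne, h₁, h₂, hi₁, hi₂⟩
  have : ∃ A, (A ∈ T₁ ∧ A ∉ T₂) ∨ (A ∈ T₂ ∧ A ∉ T₁) := by
    by_contra h
    push_neg at h
    exact hne (Set.ext fun A => ⟨fun hA => (h A).1 hA, fun hA => (h A).2 hA⟩)
  obtain ⟨A, ⟨hA1, hA2⟩ | ⟨hA1, hA2⟩⟩ := this
  · exact stmt2_key K K₀ hadh k T T₁ T₂ hT h₁ h₂ hi₁ hi₂ A hA1 hA2
  · exact stmt2_key K K₀ hadh k T T₂ T₁ hT h₂ h₁ hi₂ hi₁ A hA1 hA2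
end

section
/- For any element e of a matroid M, at least one of the connectivity systems K(M \ e) and K(M / e) adheres to K(M). That is, for at least one of N ∈ {M \ e, M / e}: for every partition (A, B) of E(M) \ {e}, there is a partition (X₁, X₂) of A or of B (possibly with one part empty) such that λ_M(X₁) ≤ λ_N(A) and λ_M(X₂) ≤ λ_N(A). -/
open Set

variable {α : Type*} {V : Type*}

/-! ### Auxiliary lemmas for Statement 4 -/

section Stmt4Aux

set_option linter.unusedSectionVars false

variable {M : Matroid α} [M.Finite] {X Y I A B : Set α} {e : α}

lemma le_mrank (hI : M.Indep I) (hIX : I ⊆ X) : I.ncard ≤ mrank M X := by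
  refine le_csSup ⟨M.E.ncard, ?_⟩ ⟨I, hI, hIX, rfl⟩
  rintro n ⟨J, hJ, hJX, rfl⟩
  exact Set.ncard_le_ncard hJ.subset_ground M.ground_finite

lemma mrank_eq (hI : M.IsBasis' I X) : mrank M X = I.ncard := by
  refine le_antisymm (csSup_le ⟨0, ∅, M.empty_indep, empty_subset _, by simp⟩ ?_)
    (le_mrank hI.indep hI.subset)
  rintro n ⟨J, hJ, hJX, rfl⟩
  obtain ⟨K, hK, hJK⟩ := hJ.subset_isBasis'_of_subset hJX
  have h1 : J.ncard ≤ K.ncard :=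
    Set.ncard_le_ncard hJK (M.set_finite K hK.indep.subset_ground)
  have h2 : K.encard = I.encard := hK.encard_eq_encard hI
  have h3 : K.ncard = I.ncard := by rw [Set.ncard_def, h2, ← Set.ncard_def]
  omega

lemma mrank_mono (h : X ⊆ Y) : mrank M X ≤ mrank M Y := by
  obtain ⟨I, hI⟩ := M.exists_isBasis' X
  rw [mrank_eq hI]
  exact le_mrank hI.indep (hI.subset.trans h)

lemma mrank_submod (M : Matroid α) [M.Finite] (X Y : Set α) :
    mrank M (X ∩ Y) + mrank M (X ∪ Y) ≤ mrank M X + mrank M Y := by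
  obtain ⟨I, hI⟩ := M.exists_isBasis' (X ∩ Y)
  obtain ⟨J, hJ, hIJ⟩ := hI.indep.subset_isBasis'_of_subset
    (hI.subset.trans (inter_subset_left.trans subset_union_left))
  have hJfin : J.Finite := M.set_finite J hJ.indep.subset_ground
  rw [mrank_eq hI, mrank_eq hJ]
  have h1 : (J ∩ X).ncard ≤ mrank M X :=
    le_mrank (hJ.indep.subset inter_subset_left) inter_subset_right
  have h2 : (J ∩ Y).ncard ≤ mrank M Y :=
    le_mrank (hJ.indep.subset inter_subset_left) inter_subset_right
  have h3 : ((J ∩ X) ∪ (J ∩ Y)).ncard + ((J ∩ X) ∩ (J ∩ Y)).ncard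
      = (J ∩ X).ncard + (J ∩ Y).ncard :=
    Set.ncard_union_add_ncard_inter _ _ (hJfin.inter_of_left X) (hJfin.inter_of_left Y)
  have h4 : (J ∩ X) ∪ (J ∩ Y) = J := by
    rw [← inter_union_distrib_left]
    exact inter_eq_self_of_subset_left hJ.subset
  have h5 : I ⊆ (J ∩ X) ∩ (J ∩ Y) :=
    subset_inter (subset_inter hIJ (hI.subset.trans inter_subset_left))
      (subset_inter hIJ (hI.subset.trans inter_subset_right))
  have h6 : I.ncard ≤ ((J ∩ X) ∩ (J ∩ Y)).ncard :=
    Set.ncard_le_ncard h5 ((hJfin.inter_of_left X).inter_of_left _)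
  rw [h4] at h3
  omega

lemma mrank_singleton_le (M : Matroid α) [M.Finite] (e : α) : mrank M {e} ≤ 1 := by
  refine csSup_le ⟨0, ∅, M.empty_indep, empty_subset _, by simp⟩ ?_
  rintro n ⟨J, hJ, hJX, rfl⟩
  simpa using Set.ncard_le_ncard hJX (finite_singleton e)

lemma dom_del (hX : X ⊆ M.E \ {e}) : lamDel M e X ≤ lamM M X := by
  have hXE : X ⊆ M.E := hX.trans diff_subset
  have i1 : (M.E \ X) ∩ (M.E \ {e}) = (M.E \ {e}) \ X := by
    ext x; simp only [mem_inter_iff, mem_diff, mem_singleton_iff]; tauto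
  have i2 : (M.E \ X) ∪ (M.E \ {e}) = M.E := by
    ext x; simp only [mem_union, mem_diff, mem_singleton_iff]
    constructor
    · tauto
    · intro hx
      by_cases hxe : x = e
      · subst hxe; exact Or.inl ⟨hx, fun h => (hX h).2 rfl⟩
      · tauto
  have s := mrank_submod M (M.E \ X) (M.E \ {e})
  rw [i1, i2] at s
  have t1 := mrank_submod M X ((M.E \ {e}) \ X)
  rw [union_diff_cancel hX] at t1
  have t2 := mrank_submod M X (M.E \ X)
  rw [union_diff_cancel hXE] at t2
  have t5 : mrank M (M.E \ {e}) ≤ mrank M M.E := mrank_mono diff_subset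
  simp only [lamDel, lamM]
  omega

lemma dom_con (he : e ∈ M.E) (hX : X ⊆ M.E \ {e}) : lamCon M e X ≤ lamM M X := by
  have hXE : X ⊆ M.E := hX.trans diff_subset
  have heX : e ∉ X := fun h => (hX h).2 rfl
  have j : ((M.E \ {e}) \ X) ∪ {e} = M.E \ X := by
    ext x; simp only [mem_union, mem_diff, mem_singleton_iff]
    constructor
    · rintro (⟨⟨h1, h2⟩, h3⟩ | rfl)
      · exact ⟨h1, h3⟩
      · exact ⟨he, heX⟩
    · rintro ⟨h1, h2⟩
      by_cases hxe : x = e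
      · exact Or.inr hxe
      · exact Or.inl ⟨⟨h1, hxe⟩, h2⟩
  have s := mrank_submod M X {e}
  have j2 : (X ∪ {e}) ∩ (M.E \ X) = {e} := by
    ext x; simp only [mem_inter_iff, mem_union, mem_diff, mem_singleton_iff]
    constructor
    · rintro ⟨h1 | rfl, h2, h3⟩
      · exact absurd h1 h3
      · rfl
    · rintro rfl; exact ⟨Or.inr rfl, he, heX⟩
  have j3 : (X ∪ {e}) ∪ (M.E \ X) = M.E := by
    ext x; simp only [mem_union, mem_diff, mem_singleton_iff]
    constructor
    · rintro ((h | rfl) | ⟨h, _⟩)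
      · exact hXE h
      · exact he
      · exact h
    · intro hx
      by_cases hxX : x ∈ X
      · exact Or.inl (Or.inl hxX)
      · exact Or.inr ⟨hx, hxX⟩
  have t := mrank_submod M (X ∪ {e}) (M.E \ X)
  rw [j2, j3] at t
  have t2 := mrank_submod M X (M.E \ X)
  rw [union_diff_cancel hXE] at t2
  simp only [lamCon, lamM, j]
  omega

lemma lamCon_comm (hu : A ∪ B = M.E \ {e}) (hd : Disjoint A B) :
    lamCon M e A = lamCon M e B := by
  have h1 : (M.E \ {e}) \ A = B := by
    rw [← hu]; exact union_diff_cancel_left hd.inter_eq.subset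
  have h2 : (M.E \ {e}) \ B = A := by
    rw [← hu]; exact union_diff_cancel_right hd.inter_eq.subset
  simp only [lamCon, h1, h2]
  omega

lemma key_ineq (he : e ∈ M.E) (hA : A ⊆ M.E \ {e}) (hB : B ⊆ M.E \ {e}) :
    lamM M (A ∩ B) + lamM M (((M.E \ {e}) \ A) ∩ ((M.E \ {e}) \ B)) ≤
      lamDel M e A + lamCon M e B + 1 := by
  have hA' : ∀ x, x ∈ A → x ∈ M.E ∧ x ≠ e := fun x hx => (hA hx : _)
  have hB' : ∀ x, x ∈ B → x ∈ M.E ∧ x ≠ e := fun x hx => (hB hx : _)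
  have heA : e ∉ A := fun h => (hA' e h).2 rfl
  have heB : e ∉ B := fun h => (hB' e h).2 rfl
  have i1 : M.E \ (A ∩ B) = ((M.E \ {e}) \ A) ∪ ((M.E \ {e}) \ B) ∪ {e} := by
    ext x
    by_cases hxe : x = e
    · subst hxe; simp [he, heA]
    · simp only [mem_diff, mem_inter_iff, mem_union, mem_singleton_iff]
      specialize hA' x; specialize hB' x; tauto
  have i2 : M.E \ (((M.E \ {e}) \ A) ∩ ((M.E \ {e}) \ B)) = A ∪ B ∪ {e} := by
    ext x
    by_cases hxe : x = e
    · subst hxe; simp [he]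
    · simp only [mem_diff, mem_inter_iff, mem_union, mem_singleton_iff]
      specialize hA' x; specialize hB' x; tauto
  have i3 : A ∩ (B ∪ {e}) = A ∩ B := by
    ext x; simp only [mem_inter_iff, mem_union, mem_singleton_iff]
    constructor
    · rintro ⟨h1, h2 | rfl⟩
      · exact ⟨h1, h2⟩
      · exact absurd h1 heA
    · tauto
  have i4 : A ∪ (B ∪ {e}) = A ∪ B ∪ {e} := (union_assoc _ _ _).symm
  have i5 : ((M.E \ {e}) \ A) ∩ (((M.E \ {e}) \ B) ∪ {e}) =
      ((M.E \ {e}) \ A) ∩ ((M.E \ {e}) \ B) := by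
    ext x; simp only [mem_inter_iff, mem_union, mem_diff, mem_singleton_iff]
    tauto
  have i6 : ((M.E \ {e}) \ A) ∪ (((M.E \ {e}) \ B) ∪ {e}) =
      ((M.E \ {e}) \ A) ∪ ((M.E \ {e}) \ B) ∪ {e} := (union_assoc _ _ _).symm
  have i7 : A ∪ ((M.E \ {e}) \ A) = M.E \ {e} := union_diff_cancel hA
  have i8 : (B ∪ {e}) ∩ (((M.E \ {e}) \ B) ∪ {e}) = {e} := by
    ext x
    by_cases hxe : x = e
    · subst hxe; simp
    · simp only [mem_inter_iff, mem_union, mem_diff, mem_singleton_iff]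
      tauto
  have i9 : (B ∪ {e}) ∪ (((M.E \ {e}) \ B) ∪ {e}) = M.E := by
    ext x
    by_cases hxe : x = e
    · subst hxe; simp [he]
    · simp only [mem_union, mem_diff, mem_singleton_iff]
      specialize hB' x
      constructor
      · tauto
      · intro hx; tauto
  have i11 : (A ∩ B) ∪ (((M.E \ {e}) \ A) ∪ ((M.E \ {e}) \ B) ∪ {e}) = M.E := by
    rw [← i1]; rw [union_diff_cancel]
    exact (inter_subset_left.trans hA).trans diff_subset
  have i12 : (((M.E \ {e}) \ A) ∩ ((M.E \ {e}) \ B)) ∪ (A ∪ B ∪ {e}) = M.E := by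
    rw [← i2]; rw [union_diff_cancel]
    intro x hx
    simp only [mem_inter_iff, mem_diff] at hx
    exact hx.1.1.1
  have s1 := mrank_submod M A (B ∪ {e})
  rw [i3, i4] at s1
  have s2 := mrank_submod M ((M.E \ {e}) \ A) (((M.E \ {e}) \ B) ∪ {e})
  rw [i5, i6] at s2
  have t1 := mrank_submod M A ((M.E \ {e}) \ A)
  rw [i7] at t1
  have t2 := mrank_submod M (B ∪ {e}) (((M.E \ {e}) \ B) ∪ {e})
  rw [i8, i9] at t2
  have t3 := mrank_submod M (A ∩ B) (((M.E \ {e}) \ A) ∪ ((M.E \ {e}) \ B) ∪ {e})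
  rw [i11] at t3
  have t4 := mrank_submod M (((M.E \ {e}) \ A) ∩ ((M.E \ {e}) \ B)) (A ∪ B ∪ {e})
  rw [i12] at t4
  have t5 : mrank M (M.E \ {e}) ≤ mrank M M.E := mrank_mono diff_subset
  have t6 : mrank M {e} ≤ 1 := mrank_singleton_le M e
  simp only [lamM, lamDel, lamCon, i1, i2]
  omega

end Stmt4Aux

/-- For any element `e` of a matroid `M`, at least one of `K(M \ e)`
and `K(M / e)` adheres to `K(M)`. -/
theorem stmt4 {α : Type*} (M : Matroid α) [M.Finite] (e : α) (he : e ∈ M.E) :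
    Adheres (KDel M e) (KM M) ∨ Adheres (KCon M e) (KM M) := by
  by_cases h : Adheres (KDel M e) (KM M)
  · exact Or.inl h
  right
  have hdomD : Dominates (KM M) (KDel M e) :=
    ⟨diff_subset, fun X hX => dom_del hX⟩
  have hdomC : Dominates (KM M) (KCon M e) :=
    ⟨diff_subset, fun X hX => dom_con he hX⟩
  rw [Adheres, not_and] at h
  have hc := h hdomD
  push_neg at hc
  simp only [KDel, KM] at hc
  obtain ⟨A, B, hABu, hABd, hfail⟩ := hc
  refine ⟨hdomC, fun C D hCDu hCDd => ?_⟩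
  simp only [KCon, KM] at hCDu ⊢
  have hAE : A ⊆ M.E \ {e} := hABu ▸ subset_union_left
  have hBE : B ⊆ M.E \ {e} := hABu ▸ subset_union_right
  have hCE : C ⊆ M.E \ {e} := hCDu ▸ subset_union_left
  have hDE : D ⊆ M.E \ {e} := hCDu ▸ subset_union_right
  have hBeq : (M.E \ {e}) \ A = B := by
    rw [← hABu]; exact union_diff_cancel_left hABd.inter_eq.subset
  have hDeq : (M.E \ {e}) \ C = D := by
    rw [← hCDu]; exact union_diff_cancel_left hCDd.inter_eq.subset
  have hCeq : (M.E \ {e}) \ D = C := by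
    rw [← hCDu]; exact union_diff_cancel_right hCDd.inter_eq.subset
  have k1 := key_ineq he hAE hCE
  rw [hBeq, hDeq] at k1
  have k2 := key_ineq he hAE hDE
  rw [hBeq, hCeq, ← lamCon_comm hCDu hCDd] at k2
  have f1 : lamDel M e A < lamM M (A ∩ C) ∨ lamDel M e A < lamM M (A ∩ D) := by
    have hu : (A ∩ C) ∪ (A ∩ D) = A := by
      rw [← inter_union_distrib_left, hCDu]
      exact inter_eq_self_of_subset_left hAE
    have := hfail (A ∩ C) (A ∩ D)
      (hCDd.mono inter_subset_right inter_subset_right) (Or.inl hu)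
    by_cases hc1 : lamM M (A ∩ C) ≤ lamDel M e A
    · exact Or.inr (this hc1)
    · exact Or.inl (not_le.mp hc1)
  have f2 : lamDel M e A < lamM M (B ∩ C) ∨ lamDel M e A < lamM M (B ∩ D) := by
    have hu : (B ∩ C) ∪ (B ∩ D) = B := by
      rw [← inter_union_distrib_left, hCDu]
      exact inter_eq_self_of_subset_left hBE
    have := hfail (B ∩ C) (B ∩ D)
      (hCDd.mono inter_subset_right inter_subset_right) (Or.inr hu)
    by_cases hc1 : lamM M (B ∩ C) ≤ lamDel M e A
    · exact Or.inr (this hc1)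
    · exact Or.inl (not_le.mp hc1)
  have hmain : (lamM M (A ∩ C) ≤ lamCon M e C ∧ lamM M (B ∩ C) ≤ lamCon M e C) ∨
      (lamM M (A ∩ D) ≤ lamCon M e C ∧ lamM M (B ∩ D) ≤ lamCon M e C) := by
    omega
  rcases hmain with ⟨h1, h2⟩ | ⟨h1, h2⟩
  · refine ⟨A ∩ C, B ∩ C, hABd.mono inter_subset_left inter_subset_left, Or.inl ?_, h1, h2⟩
    rw [← union_inter_distrib_right, hABu]
    exact inter_eq_self_of_subset_right hCE
  · refine ⟨A ∩ D, B ∩ D, hABd.mono inter_subset_left inter_subset_left, Or.inr ?_, h1, h2⟩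
    rw [← union_inter_distrib_right, hABu]
    exact inter_eq_self_of_subset_right hDE
end

section
/- Let G be a simple graph with adjacency matrix A over GF(2), and for X ⊆ V(G) define the cut-rank ρ_G(X) as the GF(2)-rank of the submatrix A[X, V(G) \ X]. Then (V(G), ρ_G) is a connectivity system: ρ_G(X) = ρ_G(V(G) \ X) for all X, and ρ_G(X ∩ Y) + ρ_G(X ∪ Y) ≤ ρ_G(X) + ρ_G(Y) for all X, Y ⊆ V(G). -/
open Set

variable {α : Type*} {V : Type*}

open Module Submodule Matrix

namespace Stmt6Aux

variable {V : Type*} {F : Type*} [Field F]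

/-- Restriction of functions `V → F` to a subset `C`. -/
noncomputable def resL (F : Type*) [Field F] {V : Type*} (C : Set V) :
    (V → F) →ₗ[F] (↥C → F) := LinearMap.funLeft F F Subtype.val

lemma mem_ker_resL {C : Set V} {f : V → F} :
    f ∈ LinearMap.ker (resL F C) ↔ ∀ v ∈ C, f v = 0 := by
  constructor
  · intro h v hv
    exact congrFun (LinearMap.mem_ker.mp h) ⟨v, hv⟩
  · intro h
    rw [LinearMap.mem_ker]
    ext ⟨v, hv⟩
    exact h v hv

lemma ker_resL_union (C D : Set V) :
    LinearMap.ker (resL F (C ∪ D)) = LinearMap.ker (resL F C) ⊓ LinearMap.ker (resL F D) := by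
  ext f
  simp only [Submodule.mem_inf, mem_ker_resL, Set.mem_union]
  constructor
  · intro h
    exact ⟨fun v hv => h v (Or.inl hv), fun v hv => h v (Or.inr hv)⟩
  · rintro ⟨h1, h2⟩ v (hv | hv)
    · exact h1 v hv
    · exact h2 v hv

lemma ker_resL_inter (C D : Set V) :
    LinearMap.ker (resL F (C ∩ D)) = LinearMap.ker (resL F C) ⊔ LinearMap.ker (resL F D) := by
  classical
  apply le_antisymm
  · intro f hf
    rw [mem_ker_resL] at hf
    have hsplit : f = (fun v => if v ∈ C then 0 else f v) + (fun v => if v ∈ C then f v else 0) := by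
      ext v; by_cases h : v ∈ C <;> simp [h]
    rw [hsplit]
    refine Submodule.add_mem_sup ?_ ?_
    · rw [mem_ker_resL]; intro v hv; simp [hv]
    · rw [mem_ker_resL]; intro v hv
      by_cases h : v ∈ C
      · simp [h, hf v ⟨h, hv⟩]
      · simp [h]
  · refine sup_le ?_ ?_ <;>
      · intro f hf
        rw [mem_ker_resL] at hf ⊢
        intro v hv
        first
        | exact hf v hv.1
        | exact hf v hv.2

lemma finrank_res_congr {C C' : Set V} {W W' : Submodule F (V → F)} (h : C = C')
    (hW : W = W') :
    finrank F (Submodule.map (resL F C) W) = finrank F (Submodule.map (resL F C') W') := by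
  subst h; subst hW; rfl

lemma finrank_map_sup_ker {M N : Type*} [AddCommGroup M] [Module F M] [AddCommGroup N]
    [Module F N] [FiniteDimensional F M] (f : M →ₗ[F] N) (p : Submodule F M) :
    finrank F (Submodule.map f p) + finrank F (LinearMap.ker f)
      = finrank F (p ⊔ LinearMap.ker f : Submodule F M) := by
  have h1 : Submodule.map f (p ⊔ LinearMap.ker f) = Submodule.map f p := by
    rw [Submodule.map_sup]
    have : Submodule.map f (LinearMap.ker f) = ⊥ := by
      rw [eq_bot_iff]
      rintro x ⟨y, hy, rfl⟩
      simpa using hy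
    rw [this, sup_bot_eq]
  have h2 := LinearMap.finrank_range_add_finrank_ker (f.domRestrict (p ⊔ LinearMap.ker f))
  rw [LinearMap.range_domRestrict, h1, LinearMap.ker_domRestrict] at h2
  rwa [LinearEquiv.finrank_eq (Submodule.comapSubtypeEquivOfLe
    (le_sup_right : LinearMap.ker f ≤ p ⊔ LinearMap.ker f))] at h2

variable [Fintype V]

lemma rank_eq_of_submatrix (A : Matrix V V F) (R C : Set V) (iC : Fintype ↥C) :
    @Matrix.rank ↥R ↥C F iC _ (Matrix.of fun (a : ↥R) (b : ↥C) => A a.1 b.1)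
      = finrank F (Submodule.map (resL F C) (Submodule.span F (A '' R))) := by
  rw [Matrix.rank_eq_finrank_span_row]
  have h1 : Set.range (Matrix.of fun (a : ↥R) (b : ↥C) => A a.1 b.1).row
      = (resL F C) '' (A '' R) := by
    rw [Set.image_eq_range (A ·) R]
    rw [← Set.range_comp]
    rfl
  rw [h1, Submodule.span_image]

lemma finrank_symm (A : Matrix V V F) (hA : Aᵀ = A) (R C : Set V) :
    finrank F (Submodule.map (resL F C) (Submodule.span F (A '' R)))
      = finrank F (Submodule.map (resL F R) (Submodule.span F (A '' C))) := by
  letI iR : Fintype ↥R := (Set.toFinite _).fintype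
  letI iC : Fintype ↥C := (Set.toFinite _).fintype
  rw [← rank_eq_of_submatrix A R C iC, ← rank_eq_of_submatrix A C R iR]
  have h : (Matrix.of fun (a : ↥C) (b : ↥R) => A a.1 b.1)
      = (Matrix.of fun (a : ↥R) (b : ↥C) => A a.1 b.1)ᵀ := by
    ext a b
    simp only [Matrix.of_apply, Matrix.transpose_apply]
    exact congrFun (congrFun hA b.1) a.1
  rw [h, Matrix.rank_transpose]

noncomputable def adjMat {V : Type*} (G : SimpleGraph V) : Matrix V V (ZMod 2) :=
  letI : DecidableRel G.Adj := Classical.decRel _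
  Matrix.of fun a b => if G.Adj a b then 1 else 0

lemma adjMat_symm (G : SimpleGraph V) : (adjMat G)ᵀ = adjMat G := by
  classical
  ext a b
  simp only [adjMat, Matrix.transpose_apply, Matrix.of_apply]
  exact if_congr (G.adj_comm b a) rfl rfl

lemma cutRankOn_eq (G : SimpleGraph V) (S X : Set V) :
    cutRankOn G S X = finrank (ZMod 2)
      (Submodule.map (resL (ZMod 2) (S \ X))
        (Submodule.span (ZMod 2) (adjMat G '' (X ∩ S)))) := by
  unfold cutRankOn
  exact rank_eq_of_submatrix (adjMat G) (X ∩ S) (S \ X) _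

end Stmt6Aux

open Stmt6Aux Module Submodule

/-- For a finite simple graph `G`, the pair `(V(G), ρ_G)` is a
connectivity system: the cut-rank is symmetric and submodular. -/
theorem stmt6 {V : Type*} [Fintype V] (G : SimpleGraph V) :
    (CR G).IsConnSys := by
  classical
  have hcut : ∀ X : Set V, cutRank G X = finrank (ZMod 2)
      (Submodule.map (resL (ZMod 2) (Set.univ \ X))
        (Submodule.span (ZMod 2) (adjMat G '' X))) := by
    intro X
    rw [cutRank, cutRankOn_eq, Set.inter_univ]
  refine ⟨Set.finite_univ, ?_, ?_⟩
  · intro X _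
    show cutRank G X = cutRank G (Set.univ \ X)
    rw [hcut, hcut,
      finrank_res_congr (Set.diff_diff_cancel_left (Set.subset_univ X)) rfl]
    exact finrank_symm _ (adjMat_symm G) X (Set.univ \ X)
  · intro X _ Y _
    show cutRank G (X ∩ Y) + cutRank G (X ∪ Y) ≤ cutRank G X + cutRank G Y
    have e1 : cutRank G X + finrank (ZMod 2) ↥(LinearMap.ker (resL (ZMod 2) (Set.univ \ X)))
        = finrank (ZMod 2) ↥(Submodule.span (ZMod 2) (adjMat G '' X)
            ⊔ LinearMap.ker (resL (ZMod 2) (Set.univ \ X))) := by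
      rw [hcut]; exact finrank_map_sup_ker _ _
    have e2 : cutRank G Y + finrank (ZMod 2) ↥(LinearMap.ker (resL (ZMod 2) (Set.univ \ Y)))
        = finrank (ZMod 2) ↥(Submodule.span (ZMod 2) (adjMat G '' Y)
            ⊔ LinearMap.ker (resL (ZMod 2) (Set.univ \ Y))) := by
      rw [hcut]; exact finrank_map_sup_ker _ _
    have e3 : cutRank G (X ∩ Y) + finrank (ZMod 2) ↥(LinearMap.ker (resL (ZMod 2) (Set.univ \ X))
          ⊓ LinearMap.ker (resL (ZMod 2) (Set.univ \ Y)))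
        = finrank (ZMod 2) ↥(Submodule.span (ZMod 2) (adjMat G '' (X ∩ Y))
            ⊔ (LinearMap.ker (resL (ZMod 2) (Set.univ \ X))
              ⊓ LinearMap.ker (resL (ZMod 2) (Set.univ \ Y)))) := by
      rw [hcut, finrank_res_congr (Set.diff_inter (s := Set.univ) (t := X) (u := Y)) rfl,
        ← ker_resL_union]
      exact finrank_map_sup_ker _ _
    have e4 : cutRank G (X ∪ Y) + finrank (ZMod 2) ↥(LinearMap.ker (resL (ZMod 2) (Set.univ \ X))
          ⊔ LinearMap.ker (resL (ZMod 2) (Set.univ \ Y)))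
        = finrank (ZMod 2) ↥(Submodule.span (ZMod 2) (adjMat G '' (X ∪ Y))
            ⊔ (LinearMap.ker (resL (ZMod 2) (Set.univ \ X))
              ⊔ LinearMap.ker (resL (ZMod 2) (Set.univ \ Y)))) := by
      rw [hcut, finrank_res_congr (Set.diff_inter_diff (s := Set.univ) (t := X) (u := Y)).symm rfl,
        ← ker_resL_inter]
      exact finrank_map_sup_ker _ _
    have e5 := Submodule.finrank_sup_add_finrank_inf_eq
      (LinearMap.ker (resL (ZMod 2) (Set.univ \ X)))
      (LinearMap.ker (resL (ZMod 2) (Set.univ \ Y)))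
    have key : finrank (ZMod 2) ↥(Submodule.span (ZMod 2) (adjMat G '' (X ∩ Y))
            ⊔ (LinearMap.ker (resL (ZMod 2) (Set.univ \ X))
              ⊓ LinearMap.ker (resL (ZMod 2) (Set.univ \ Y))))
          + finrank (ZMod 2) ↥(Submodule.span (ZMod 2) (adjMat G '' (X ∪ Y))
            ⊔ (LinearMap.ker (resL (ZMod 2) (Set.univ \ X))
              ⊔ LinearMap.ker (resL (ZMod 2) (Set.univ \ Y))))
        ≤ finrank (ZMod 2) ↥(Submodule.span (ZMod 2) (adjMat G '' X)
            ⊔ LinearMap.ker (resL (ZMod 2) (Set.univ \ X)))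
          + finrank (ZMod 2) ↥(Submodule.span (ZMod 2) (adjMat G '' Y)
            ⊔ LinearMap.ker (resL (ZMod 2) (Set.univ \ Y))) := by
      rw [← Submodule.finrank_sup_add_finrank_inf_eq
        (Submodule.span (ZMod 2) (adjMat G '' X) ⊔ LinearMap.ker (resL (ZMod 2) (Set.univ \ X)))
        (Submodule.span (ZMod 2) (adjMat G '' Y) ⊔ LinearMap.ker (resL (ZMod 2) (Set.univ \ Y)))]
      have hsup : Submodule.span (ZMod 2) (adjMat G '' (X ∪ Y))
            ⊔ (LinearMap.ker (resL (ZMod 2) (Set.univ \ X))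
              ⊔ LinearMap.ker (resL (ZMod 2) (Set.univ \ Y)))
          = (Submodule.span (ZMod 2) (adjMat G '' X) ⊔ LinearMap.ker (resL (ZMod 2) (Set.univ \ X)))
            ⊔ (Submodule.span (ZMod 2) (adjMat G '' Y)
              ⊔ LinearMap.ker (resL (ZMod 2) (Set.univ \ Y))) := by
        rw [show adjMat G '' (X ∪ Y) = adjMat G '' X ∪ adjMat G '' Y from Set.image_union _ _ _,
          Submodule.span_union]
        exact sup_sup_sup_comm _ _ _ _
      have hle : Submodule.span (ZMod 2) (adjMat G '' (X ∩ Y))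
            ⊔ (LinearMap.ker (resL (ZMod 2) (Set.univ \ X))
              ⊓ LinearMap.ker (resL (ZMod 2) (Set.univ \ Y)))
          ≤ (Submodule.span (ZMod 2) (adjMat G '' X) ⊔ LinearMap.ker (resL (ZMod 2) (Set.univ \ X)))
            ⊓ (Submodule.span (ZMod 2) (adjMat G '' Y)
              ⊔ LinearMap.ker (resL (ZMod 2) (Set.univ \ Y))) := by
        refine sup_le (le_inf ?_ ?_) (le_inf ?_ ?_)
        · exact le_trans (Submodule.span_mono
            (Set.image_mono Set.inter_subset_left)) le_sup_left
        · exact le_trans (Submodule.span_mono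
            (Set.image_mono Set.inter_subset_right)) le_sup_left
        · exact le_trans inf_le_left le_sup_right
        · exact le_trans inf_le_right le_sup_right
      rw [hsup]
      have hmono := Submodule.finrank_mono hle
      omega
    omega
end

section
/- Let G be a simple graph, v a vertex, and e = uv an edge incident with v. For any vertex sets A, B ⊆ V(G) \ {v}: ρ_{G−v}(A) + ρ_{(G×e)−v}(B) ≥ ρ_G(A ∩ B) + ρ_G(A ∪ B ∪ {v}) − 1. -/
open Set

variable {α : Type*} {V : Type*}

set_option linter.unusedSectionVars false
namespace S7

open Matrix Submodule Module Set

variable [Fintype V]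

noncomputable def adjMat (G : SimpleGraph V) : Matrix V V (ZMod 2) :=
  letI : DecidableRel G.Adj := Classical.decRel _
  Matrix.of fun a b => if G.Adj a b then 1 else 0

lemma adjMat_symm (G : SimpleGraph V) (a b : V) : adjMat G a b = adjMat G b a := by
  classical
  simp only [adjMat, Matrix.of_apply]
  exact if_congr (G.adj_comm a b) rfl rfl

lemma adjMat_transpose (G : SimpleGraph V) : (adjMat G)ᵀ = adjMat G := by
  ext a b
  exact adjMat_symm G b a

lemma adjMat_irrefl (G : SimpleGraph V) (a : V) : adjMat G a a = 0 := by
  classical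
  simp only [adjMat, Matrix.of_apply]
  rw [if_neg (G.irrefl)]

lemma adjMat_of_adj {G : SimpleGraph V} {a b : V} (h : G.Adj a b) : adjMat G a b = 1 := by
  classical
  simp only [adjMat, Matrix.of_apply]
  rw [if_pos h]

noncomputable def subRank (M : Matrix V V (ZMod 2)) (X Y : Set V) : ℕ :=
  letI : Fintype ↥X := (Set.toFinite _).fintype
  letI : Fintype ↥Y := (Set.toFinite _).fintype
  (M.submatrix (Subtype.val : X → V) (Subtype.val : Y → V)).rank

lemma subRank_congr (M : Matrix V V (ZMod 2)) {X X' Y Y' : Set V} (h1 : X = X')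
    (h2 : Y = Y') : subRank M X Y = subRank M X' Y' := by
  subst h1; subst h2; rfl

lemma subRank_symm (M : Matrix V V (ZMod 2)) (h : Mᵀ = M) (X Y : Set V) :
    subRank M X Y = subRank M Y X := by
  unfold subRank
  letI : Fintype ↥X := (Set.toFinite _).fintype
  letI : Fintype ↥Y := (Set.toFinite _).fintype
  rw [← Matrix.rank_transpose (M.submatrix (Subtype.val : X → V) (Subtype.val : Y → V)),
    Matrix.transpose_submatrix, h]

noncomputable def res (X : Set V) : (V → ZMod 2) →ₗ[ZMod 2] (↥X → ZMod 2) :=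
  LinearMap.funLeft _ _ Subtype.val

def colS (M : Matrix V V (ZMod 2)) (Y : Set V) : Submodule (ZMod 2) (V → ZMod 2) :=
  span (ZMod 2) ((fun y x => M x y) '' Y)

lemma subRank_eq (M : Matrix V V (ZMod 2)) (X Y : Set V) :
    subRank M X Y = finrank (ZMod 2) ↥((colS M Y).map (res X)) := by
  letI : Fintype ↥X := (Set.toFinite X).fintype
  letI : Fintype ↥Y := (Set.toFinite Y).fintype
  have hs : span (ZMod 2) (Set.range (M.submatrix (Subtype.val : X → V)
      (Subtype.val : Y → V))ᵀ) = (colS M Y).map (res X) := by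
    rw [colS, Submodule.map_span]
    congr 1
    ext f
    simp only [Set.mem_range, Set.mem_image]
    constructor
    · rintro ⟨y, rfl⟩
      exact ⟨fun x => M x y, ⟨y, y.2, rfl⟩, rfl⟩
    · rintro ⟨g, ⟨y, hy, rfl⟩, rfl⟩
      exact ⟨⟨y, hy⟩, rfl⟩
  rw [subRank, Matrix.rank_eq_finrank_span_cols]
  exact congrArg (fun s : Submodule (ZMod 2) (↥X → ZMod 2) => finrank (ZMod 2) ↥s) hs

lemma finrank_map_add_ker {E F' : Type*} [AddCommGroup E] [Module (ZMod 2) E]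
    [AddCommGroup F'] [Module (ZMod 2) F'] [FiniteDimensional (ZMod 2) E]
    (f : E →ₗ[ZMod 2] F') (p : Submodule (ZMod 2) E) :
    finrank (ZMod 2) ↥(p.map f) + finrank (ZMod 2) ↥(p ⊓ LinearMap.ker f) =
      finrank (ZMod 2) ↥p := by
  have h := LinearMap.finrank_range_add_finrank_ker (f.domRestrict p)
  rw [LinearMap.range_domRestrict, LinearMap.ker_domRestrict] at h
  have e : (LinearMap.ker f).comap p.subtype = (p ⊓ LinearMap.ker f).comap p.subtype := by
    rw [Submodule.comap_inf, Submodule.comap_subtype_self, top_inf_eq]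
  rw [e, (Submodule.comapSubtypeEquivOfLe (inf_le_left :
    p ⊓ LinearMap.ker f ≤ p)).finrank_eq] at h
  exact h

lemma finrank_le_map_add_ker {E F' : Type*} [AddCommGroup E] [Module (ZMod 2) E]
    [AddCommGroup F'] [Module (ZMod 2) F'] [FiniteDimensional (ZMod 2) E]
    (f : E →ₗ[ZMod 2] F') (p : Submodule (ZMod 2) E) :
    finrank (ZMod 2) ↥p ≤ finrank (ZMod 2) ↥(p.map f) +
      finrank (ZMod 2) ↥(LinearMap.ker f) := by
  have h := finrank_map_add_ker f p
  have h2 : finrank (ZMod 2) ↥(p ⊓ LinearMap.ker f) ≤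
      finrank (ZMod 2) ↥(LinearMap.ker f) := Submodule.finrank_mono inf_le_right
  omega

lemma mem_kerRes {X : Set V} {w : V → ZMod 2} :
    w ∈ LinearMap.ker (res X) ↔ ∀ x ∈ X, w x = 0 := by
  simp only [res, LinearMap.mem_ker, LinearMap.funLeft_apply]
  constructor
  · intro h x hx
    exact congrFun h ⟨x, hx⟩
  · intro h
    funext x
    exact h x.1 x.2

lemma kerRes_inter (X₁ X₂ : Set V) :
    LinearMap.ker (res (V := V) (X₁ ∩ X₂)) =
      LinearMap.ker (res X₁) ⊔ LinearMap.ker (res X₂) := by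
  classical
  apply le_antisymm
  · intro w hw
    rw [mem_kerRes] at hw
    have hsplit : w = (fun x => if x ∈ X₁ then 0 else w x) +
        (fun x => if x ∈ X₁ then w x else 0) := by
      funext x; by_cases h : x ∈ X₁ <;> simp [h]
    rw [hsplit]
    refine Submodule.add_mem_sup ?_ ?_
    · rw [mem_kerRes]; intro x hx; simp [hx]
    · rw [mem_kerRes]; intro x hx
      by_cases h : x ∈ X₁
      · simp [h, hw x ⟨h, hx⟩]
      · simp [h]
  · refine sup_le ?_ ?_ <;>
    · intro w hw
      rw [mem_kerRes] at hw ⊢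
      intro x hx
      first | exact hw x hx.1 | exact hw x hx.2

lemma kerRes_union (X₁ X₂ : Set V) :
    LinearMap.ker (res (V := V) (X₁ ∪ X₂)) =
      LinearMap.ker (res X₁) ⊓ LinearMap.ker (res X₂) := by
  ext w
  simp only [Submodule.mem_inf, mem_kerRes]
  constructor
  · intro h
    exact ⟨fun x hx => h x (Or.inl hx), fun x hx => h x (Or.inr hx)⟩
  · rintro ⟨h1, h2⟩ x (hx | hx)
    · exact h1 x hx
    · exact h2 x hx

lemma colS_union (M : Matrix V V (ZMod 2)) (Y₁ Y₂ : Set V) :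
    colS M (Y₁ ∪ Y₂) = colS M Y₁ ⊔ colS M Y₂ := by
  rw [colS, colS, colS, Set.image_union, Submodule.span_union]

lemma colS_mono (M : Matrix V V (ZMod 2)) {Y₁ Y₂ : Set V} (h : Y₁ ⊆ Y₂) :
    colS M Y₁ ≤ colS M Y₂ :=
  Submodule.span_mono (Set.image_mono h)

lemma subRank_add_kerrank (M : Matrix V V (ZMod 2)) (X Y : Set V) :
    subRank M X Y + finrank (ZMod 2) ↥(LinearMap.ker (res X)) =
      finrank (ZMod 2) ↥(colS M Y ⊔ LinearMap.ker (res X)) := by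
  have h1 : subRank M X Y + finrank (ZMod 2) ↥(colS M Y ⊓ LinearMap.ker (res X)) =
      finrank (ZMod 2) ↥(colS M Y) := by
    rw [subRank_eq]; exact finrank_map_add_ker _ _
  have h2 := Submodule.finrank_sup_add_finrank_inf_eq (colS M Y) (LinearMap.ker (res X))
  omega

lemma subRank_submod (M : Matrix V V (ZMod 2)) (X₁ X₂ Y₁ Y₂ : Set V) :
    subRank M (X₁ ∩ X₂) (Y₁ ∪ Y₂) + subRank M (X₁ ∪ X₂) (Y₁ ∩ Y₂) ≤
      subRank M X₁ Y₁ + subRank M X₂ Y₂ := by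
  have e1 := subRank_add_kerrank M (X₁ ∩ X₂) (Y₁ ∪ Y₂)
  have e2 := subRank_add_kerrank M (X₁ ∪ X₂) (Y₁ ∩ Y₂)
  have e3 := subRank_add_kerrank M X₁ Y₁
  have e4 := subRank_add_kerrank M X₂ Y₂
  rw [kerRes_inter, colS_union] at e1
  rw [kerRes_union] at e2
  have hsup : (colS M Y₁ ⊔ colS M Y₂) ⊔ (LinearMap.ker (res X₁) ⊔ LinearMap.ker (res X₂)) = (colS M Y₁ ⊔ LinearMap.ker (res X₁)) ⊔ (colS M Y₂ ⊔ LinearMap.ker (res X₂)) := sup_sup_sup_comm _ _ _ _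
  rw [hsup] at e1
  have hle : colS M (Y₁ ∩ Y₂) ⊔ (LinearMap.ker (res X₁) ⊓ LinearMap.ker (res X₂)) ≤ (colS M Y₁ ⊔ LinearMap.ker (res X₁)) ⊓ (colS M Y₂ ⊔ LinearMap.ker (res X₂)) := by
    refine le_inf (sup_le ?_ ?_) (sup_le ?_ ?_)
    · exact le_trans (colS_mono M Set.inter_subset_left) le_sup_left
    · exact le_trans inf_le_left le_sup_right
    · exact le_trans (colS_mono M Set.inter_subset_right) le_sup_left
    · exact le_trans inf_le_right le_sup_right
  have h2' : finrank (ZMod 2) ↥(colS M (Y₁ ∩ Y₂) ⊔ (LinearMap.ker (res X₁) ⊓ LinearMap.ker (res X₂))) ≤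
      finrank (ZMod 2) ↥((colS M Y₁ ⊔ LinearMap.ker (res X₁)) ⊓ (colS M Y₂ ⊔ LinearMap.ker (res X₂))) := Submodule.finrank_mono hle
  have hm := Submodule.finrank_sup_add_finrank_inf_eq (colS M Y₁ ⊔ LinearMap.ker (res X₁)) (colS M Y₂ ⊔ LinearMap.ker (res X₂))
  have hk := Submodule.finrank_sup_add_finrank_inf_eq (LinearMap.ker (res (V := V) X₁)) (LinearMap.ker (res X₂))
  omega

lemma localComp_adj (G : SimpleGraph V) (w a b : V) :
    (localComp G w).Adj a b ↔ a ≠ b ∧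
      ((G.Adj w a ∧ G.Adj w b ∧ ¬ G.Adj a b) ∨ (¬ (G.Adj w a ∧ G.Adj w b) ∧ G.Adj a b)) :=
  Iff.rfl

lemma pivot_entry {G : SimpleGraph V} {u v : V} (he : G.Adj u v) {x y : V}
    (hxu : x ≠ u) (hxv : x ≠ v) (hyu : y ≠ u) (hyv : y ≠ v) :
    adjMat (pivot G u v) x y =
      adjMat G x y + adjMat G x u * adjMat G v y + adjMat G x v * adjMat G u y := by
  classical
  have he' : G.Adj v u := he.symm
  have huv : u ≠ v := he.ne
  simp only [adjMat, Matrix.of_apply]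
  by_cases hxy : x = y
  · subst hxy
    rw [if_neg ((pivot G u v).irrefl), if_neg (G.irrefl)]
    by_cases h2 : G.Adj u x <;> by_cases h3 : G.Adj v x <;>
      simp [G.adj_comm x u, G.adj_comm x v, h2, h3] <;> decide
  · by_cases h1 : G.Adj x y <;> by_cases h2 : G.Adj u x <;> by_cases h3 : G.Adj v x <;>
      by_cases h4 : G.Adj u y <;> by_cases h5 : G.Adj v y <;>
      simp [pivot, localComp_adj, G.adj_comm x u, G.adj_comm x v, G.adj_comm y u,
        G.adj_comm y v, h1, h2, h3, h4, h5, he, he', SimpleGraph.irrefl,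
        hxy, hxu, hxv, hyu, hyv, huv, Ne.symm hxy, Ne.symm hxu, Ne.symm hxv,
        Ne.symm hyu, Ne.symm hyv, Ne.symm huv] <;> decide

lemma pivot_entry_u {G : SimpleGraph V} {u v : V} (he : G.Adj u v) {x : V}
    (hxu : x ≠ u) (hxv : x ≠ v) :
    adjMat (pivot G u v) u x = adjMat G v x := by
  classical
  have he' : G.Adj v u := he.symm
  have huv : u ≠ v := he.ne
  simp only [adjMat, Matrix.of_apply]
  by_cases h2 : G.Adj u x <;> by_cases h3 : G.Adj v x <;>
    simp [pivot, localComp_adj, G.adj_comm x u, G.adj_comm x v, h2, h3, he, he',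
      SimpleGraph.irrefl, hxu, hxv, huv, Ne.symm hxu, Ne.symm hxv, Ne.symm huv] <;> decide

lemma adjMat_of_not_adj {G : SimpleGraph V} {a b : V} (h : ¬ G.Adj a b) :
    adjMat G a b = 0 := by
  classical
  simp only [adjMat, Matrix.of_apply]
  rw [if_neg h]

lemma res_apply (X : Set V) (w : V → ZMod 2) (z : ↥X) : res X w z = w z.1 := rfl

lemma pivotStep {G : SimpleGraph V} {u v : V} (he : G.Adj u v) (P Q : Set V)
    (huQ : u ∈ Q) (hvP : v ∉ P) (hvQ : v ∉ Q) (huP : u ∉ P) :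
    subRank (adjMat G) (Q ∪ {v}) (P ∪ {v}) ≤ subRank (adjMat (pivot G u v)) Q P + 1 := by
  classical
  have huv : u ≠ v := he.ne
  have hvQv : v ∈ Q ∪ {v} := Or.inr rfl
  have huQv : u ∈ Q ∪ {v} := Or.inl huQ
  let T : (↥(Q ∪ {v}) → ZMod 2) →ₗ[ZMod 2] (↥Q → ZMod 2) :=
    { toFun := fun w y => if (y : V) = u then w ⟨v, hvQv⟩
        else w ⟨y.1, Or.inl y.2⟩ + w ⟨u, huQv⟩ * adjMat G v y.1 +
          w ⟨v, hvQv⟩ * adjMat G u y.1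
      map_add' := by
        intro w₁ w₂
        funext y
        by_cases h : (y : V) = u <;> simp [h] <;> ring
      map_smul' := by
        intro c w
        funext y
        by_cases h : (y : V) = u <;> simp [h, smul_eq_mul] <;> ring }
  have hT : ∀ (w : ↥(Q ∪ {v}) → ZMod 2) (y : ↥Q), T w y =
      if (y : V) = u then w ⟨v, hvQv⟩
      else w ⟨y.1, Or.inl y.2⟩ + w ⟨u, huQv⟩ * adjMat G v y.1 +
        w ⟨v, hvQv⟩ * adjMat G u y.1 := fun _ _ => rfl
  have hTcol : ∀ p ∈ P, T (res (Q ∪ {v}) (fun z => adjMat G z p)) =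
      res Q (fun z => adjMat (pivot G u v) z p) := by
    intro p hp
    have hpu : p ≠ u := fun h => huP (h ▸ hp)
    have hpv : p ≠ v := fun h => hvP (h ▸ hp)
    funext y
    have hyv' : (y : V) ≠ v := fun h => hvQ (h ▸ y.2)
    rw [hT]
    by_cases hy : (y : V) = u
    · rw [if_pos hy]
      simp only [res_apply]
      rw [hy]
      exact (pivot_entry_u he hpu hpv).symm
    · rw [if_neg hy]
      simp only [res_apply]
      rw [pivot_entry he hy hyv' hpu hpv, adjMat_symm G (y : V) u, adjMat_symm G (y : V) v]
      ring
  have hTv : T (res (Q ∪ {v}) (fun z => adjMat G z v)) = 0 := by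
    funext y
    rw [hT]
    simp only [res_apply, Pi.zero_apply]
    by_cases hy : (y : V) = u
    · rw [if_pos hy]
      exact adjMat_irrefl G v
    · rw [if_neg hy]
      rw [adjMat_symm G (y : V) v, adjMat_of_adj he, adjMat_irrefl]
      exact (by decide : ∀ a b : ZMod 2, a + 1 * a + 0 * b = 0) _ _
  have hker0 : ∀ w ∈ LinearMap.ker T, w ⟨u, huQv⟩ = 0 → w = 0 := by
    intro w hw h0
    have hw' : T w = 0 := hw
    have hv0 : w ⟨v, hvQv⟩ = 0 := by
      have h1 := congrFun hw' ⟨u, huQ⟩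
      rwa [hT, if_pos rfl] at h1
    funext z
    simp only [Pi.zero_apply]
    rcases z.2 with hz | hz
    · by_cases hzu : (z : V) = u
      · rw [show z = (⟨u, huQv⟩ : ↥(Q ∪ {v})) from Subtype.ext hzu]
        exact h0
      · have h1 := congrFun hw' ⟨z.1, hz⟩
        rw [hT, if_neg hzu, h0, hv0] at h1
        simp only [zero_mul, add_zero] at h1
        rw [show z = (⟨z.1, Or.inl hz⟩ : ↥(Q ∪ {v})) from Subtype.ext rfl]
        exact h1
    · rw [show z = (⟨v, hvQv⟩ : ↥(Q ∪ {v})) from Subtype.ext hz]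
      exact hv0
  have hker : finrank (ZMod 2) ↥(LinearMap.ker T) ≤ 1 := by
    let φ : ↥(LinearMap.ker T) →ₗ[ZMod 2] ZMod 2 :=
      { toFun := fun w => w.1 ⟨u, huQv⟩
        map_add' := fun a b => rfl
        map_smul' := fun c a => rfl }
    have hinj : Function.Injective φ := by
      rw [← LinearMap.ker_eq_bot, eq_bot_iff]
      intro w hw
      have h0 : w.1 ⟨u, huQv⟩ = 0 := hw
      have hz : w.1 = 0 := hker0 w.1 w.2 h0
      simpa [Submodule.mem_bot] using Subtype.ext hz
    calc finrank (ZMod 2) ↥(LinearMap.ker T) ≤ finrank (ZMod 2) (ZMod 2) :=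
          LinearMap.finrank_le_finrank_of_injective hinj
      _ = 1 := Module.finrank_self _
  rw [subRank_eq (adjMat G) (Q ∪ {v}) (P ∪ {v}), subRank_eq (adjMat (pivot G u v)) Q P]
  have hmaple : (((colS (adjMat G) (P ∪ {v})).map (res (Q ∪ {v}))).map T) ≤
      (colS (adjMat (pivot G u v)) P).map (res Q) := by
    rw [← Submodule.map_comp, colS, Submodule.map_span, Submodule.span_le]
    rintro f ⟨g, ⟨p, hp, rfl⟩, rfl⟩
    rcases hp with hp | hp
    · have heq : (T.comp (res (Q ∪ {v}))) (fun x => adjMat G x p) =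
          res Q (fun z => adjMat (pivot G u v) z p) := hTcol p hp
      rw [LinearMap.comp_apply] at heq
      show T (res (Q ∪ {v}) (fun x => adjMat G x p)) ∈ _
      rw [heq]
      exact Submodule.mem_map_of_mem (Submodule.subset_span ⟨p, hp, rfl⟩)
    · rw [Set.mem_singleton_iff] at hp
      show T (res (Q ∪ {v}) (fun x => adjMat G x p)) ∈ _
      rw [show (fun x => adjMat G x p) = (fun z => adjMat G z v) from by rw [hp], hTv]
      exact Submodule.zero_mem _
  have hfin1 := finrank_le_map_add_ker T ((colS (adjMat G) (P ∪ {v})).map (res (Q ∪ {v})))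
  have hfin2 : finrank (ZMod 2) ↥(((colS (adjMat G) (P ∪ {v})).map (res (Q ∪ {v}))).map T) ≤
      finrank (ZMod 2) ↥((colS (adjMat (pivot G u v)) P).map (res Q)) :=
    Submodule.finrank_mono hmaple
  omega

lemma cutRankOn_eq (G : SimpleGraph V) (S X : Set V) :
    cutRankOn G S X = subRank (adjMat G) (X ∩ S) (S \ X) := by
  classical
  unfold cutRankOn subRank
  congr 1

end S7

/-- For a simple graph `G`, a vertex `v`, an edge `e = uv` incident
with `v`, and vertex sets `A, B ⊆ V(G) \ {v}`:
`ρ_{G-v}(A) + ρ_{(G×e)-v}(B) ≥ ρ_G(A ∩ B) + ρ_G(A ∪ B ∪ {v}) - 1`. -/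
theorem stmt7 {V : Type*} [Fintype V] (G : SimpleGraph V) (u v : V) (he : G.Adj u v)
    (A B : Set V) (hA : A ⊆ {v}ᶜ) (hB : B ⊆ {v}ᶜ) :
    cutRank G (A ∩ B) + cutRank G (A ∪ B ∪ {v}) - 1 ≤
      cutRankOn G {v}ᶜ A + cutRankOn (pivot G u v) {v}ᶜ B := by
  classical
  have hvA : v ∉ A := fun h => (hA h) rfl
  have hvB : v ∉ B := fun h => (hB h) rfl
  have huv : u ≠ v := he.ne
  have hMsym := S7.adjMat_transpose G
  have hNsym := S7.adjMat_transpose (pivot G u v)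
  have e1 : cutRankOn G {v}ᶜ A = S7.subRank (S7.adjMat G) A (A ∪ {v})ᶜ := by
    rw [S7.cutRankOn_eq]
    apply S7.subRank_congr
    · exact Set.inter_eq_left.mpr hA
    · ext x
      simp only [Set.mem_diff, Set.mem_compl_iff, Set.mem_union, Set.mem_singleton_iff]
      tauto
  have e2 : cutRankOn (pivot G u v) {v}ᶜ B =
      S7.subRank (S7.adjMat (pivot G u v)) B (B ∪ {v})ᶜ := by
    rw [S7.cutRankOn_eq]
    apply S7.subRank_congr
    · exact Set.inter_eq_left.mpr hB
    · ext x
      simp only [Set.mem_diff, Set.mem_compl_iff, Set.mem_union, Set.mem_singleton_iff]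
      tauto
  have e3 : cutRank G (A ∩ B) = S7.subRank (S7.adjMat G) (A ∩ B) ((A ∩ B)ᶜ) := by
    rw [cutRank, S7.cutRankOn_eq]
    apply S7.subRank_congr
    · exact Set.inter_univ _
    · ext x
      simp [Set.mem_diff]
  have e4 : cutRank G (A ∪ B ∪ {v}) =
      S7.subRank (S7.adjMat G) (A ∪ B ∪ {v}) ((A ∪ B ∪ {v})ᶜ) := by
    rw [cutRank, S7.cutRankOn_eq]
    apply S7.subRank_congr
    · exact Set.inter_univ _
    · ext x
      simp [Set.mem_diff]
  have s2 : Bᶜ \ {v} = (B ∪ {v})ᶜ := by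
    ext x
    simp only [Set.mem_diff, Set.mem_compl_iff, Set.mem_union, Set.mem_singleton_iff]
    tauto
  have s1 : (Bᶜ \ {v}) ∪ {v} = Bᶜ := by
    ext x
    simp only [Set.mem_diff, Set.mem_compl_iff, Set.mem_union, Set.mem_singleton_iff]
    by_cases hxv : x = v
    · subst hxv; simp [hvB]
    · tauto
  have hp : S7.subRank (S7.adjMat G) (B ∪ {v}) Bᶜ ≤
      S7.subRank (S7.adjMat (pivot G u v)) B ((B ∪ {v})ᶜ) + 1 := by
    by_cases huB : u ∈ B
    · have h := S7.pivotStep he (Bᶜ \ {v}) B huB (fun hh => hh.2 rfl) hvB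
        (fun hh => hh.1 huB)
      rw [S7.subRank_congr (S7.adjMat G) rfl s1, S7.subRank_congr _ (rfl : B = B) s2] at h
      exact h
    · have h := S7.pivotStep he B (Bᶜ \ {v}) ⟨huB, huv⟩ hvB (fun hh => hh.2 rfl) huB
      rw [S7.subRank_congr (S7.adjMat G) s1 rfl] at h
      rw [S7.subRank_symm _ hMsym (B ∪ {v}) Bᶜ]
      rw [S7.subRank_symm _ hNsym B ((B ∪ {v})ᶜ), ← s2]
      exact h
  have hsub := S7.subRank_submod (S7.adjMat G) A (B ∪ {v}) ((A ∪ {v})ᶜ) Bᶜ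
  have t1 : A ∩ (B ∪ {v}) = A ∩ B := by
    ext x
    simp only [Set.mem_inter_iff, Set.mem_union, Set.mem_singleton_iff]
    constructor
    · rintro ⟨h1, h2 | h2⟩
      · exact ⟨h1, h2⟩
      · exact absurd (h2 ▸ h1) hvA
    · rintro ⟨h1, h2⟩; exact ⟨h1, Or.inl h2⟩
  have t2 : (A ∪ {v})ᶜ ∪ Bᶜ = (A ∩ B)ᶜ := by
    ext x
    simp only [Set.mem_union, Set.mem_compl_iff, Set.mem_inter_iff, Set.mem_singleton_iff]
    by_cases hxv : x = v
    · subst hxv; simp [hvB]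
    · tauto
  have t3 : A ∪ (B ∪ {v}) = A ∪ B ∪ {v} := (Set.union_assoc _ _ _).symm
  have t4 : (A ∪ {v})ᶜ ∩ Bᶜ = (A ∪ B ∪ {v})ᶜ := by
    ext x
    simp only [Set.mem_inter_iff, Set.mem_compl_iff, Set.mem_union, Set.mem_singleton_iff]
    tauto
  rw [S7.subRank_congr (S7.adjMat G) t1 t2, S7.subRank_congr (S7.adjMat G) t3 t4] at hsub
  rw [e1, e2, e3, e4]
  omega
end

section
/- Let G be a simple graph, v a vertex of G, and e an edge incident with v. Then at least one of the connectivity systems CR(G − v) and CR((G × e) − v) adheres to CR(G). -/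
set_option linter.unusedSectionVars false
set_option maxHeartbeats 1000000


open Set

variable {α : Type*} {V : Type*}

open Set Submodule Module

namespace CRaux

noncomputable section

abbrev F2 := ZMod 2

variable {V : Type*} [Fintype V]

/-- restriction of a function to coordinates in `C` -/
def resL (C : Set V) : (V → F2) →ₗ[F2] (C → F2) :=
  LinearMap.funLeft F2 F2 (Subtype.val)

@[simp] lemma resL_apply (C : Set V) (g : V → F2) (y : C) : resL C g y = g y := rfl

def rowSp (M : Matrix V V F2) (R : Set V) : Submodule F2 (V → F2) :=
  Submodule.span F2 ((fun x => (M x : V → F2)) '' R)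

def sr (M : Matrix V V F2) (R C : Set V) : ℕ :=
  finrank F2 ((rowSp M R).map (resL C))

lemma sr_eq_span (M : Matrix V V F2) (R C : Set V) :
    sr M R C = finrank F2 (Submodule.span F2 ((fun x => resL C (M x)) '' R)) := by
  rw [sr, rowSp, Submodule.map_span, Set.image_image]

/-- bridge to Matrix.rank -/
lemma sr_eq_rank (M : Matrix V V F2) (R C : Set V) [Fintype ↥C] :
    (M.submatrix (Subtype.val : R → V) (Subtype.val : C → V)).rank = sr M R C := by
  rw [Matrix.rank_eq_finrank_span_row, sr_eq_span]
  congr 2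
  all_goals rw [Set.image_eq_range]; rfl

end

end CRaux

namespace CRaux

noncomputable section
open Submodule Module Set

variable {K : Type*} [Field K] {M N : Type*} [AddCommGroup M] [Module K M]
  [AddCommGroup N] [Module K N]

lemma finrank_map_add_inf_ker [FiniteDimensional K M] (f : M →ₗ[K] N) (p : Submodule K M) :
    finrank K (p.map f) + finrank K (p ⊓ LinearMap.ker f : Submodule K M) = finrank K p := by
  have h := LinearMap.finrank_range_add_finrank_ker (f.domRestrict p)
  rw [LinearMap.range_domRestrict, LinearMap.ker_domRestrict] at h
  rw [← h]
  congr 1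
  have h2 : (LinearMap.ker f).comap p.subtype = (p ⊓ LinearMap.ker f).comap p.subtype := by
    rw [Submodule.comap_inf, Submodule.comap_subtype_self, top_inf_eq]
  rw [h2]
  exact (Submodule.comapSubtypeEquivOfLe (inf_le_left : p ⊓ LinearMap.ker f ≤ p)).finrank_eq.symm

lemma span_insert_add_smul {ι : Type*} (a : M) (f : ι → M) (c : ι → K) (s : Set ι) :
    Submodule.span K (insert a ((fun i => f i + c i • a) '' s)) =
      Submodule.span K (insert a (f '' s)) := by
  apply le_antisymm <;> rw [Submodule.span_le] <;> rintro g (rfl | ⟨i, hi, rfl⟩)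
  · exact Submodule.subset_span (mem_insert _ _)
  · refine Submodule.add_mem _ (Submodule.subset_span (Set.mem_insert_of_mem _ ⟨i, hi, rfl⟩))
      (Submodule.smul_mem _ _ (Submodule.subset_span (mem_insert _ _)))
  · exact Submodule.subset_span (mem_insert _ _)
  · have : f i = (f i + c i • a) - c i • a := by abel
    rw [this]
    refine Submodule.sub_mem _ (Submodule.subset_span (Set.mem_insert_of_mem _ ⟨i, hi, rfl⟩))
      (Submodule.smul_mem _ _ (Submodule.subset_span (mem_insert _ _)))

lemma finrank_span_insert_eval [FiniteDimensional K M] (w : M) (S : Set M) (e : M →ₗ[K] K)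
    (hw : e w = 1) (hS : ∀ g ∈ S, e g = 0) :
    finrank K (Submodule.span K (insert w S)) = finrank K (Submodule.span K S) + 1 := by
  have hSle : Submodule.span K S ≤ LinearMap.ker e := by
    rw [Submodule.span_le]; intro g hg; exact hS g hg
  have hinf : (K ∙ w) ⊓ Submodule.span K S = ⊥ := by
    rw [eq_bot_iff]
    rintro x ⟨hx1, hx2⟩
    obtain ⟨c, rfl⟩ := Submodule.mem_span_singleton.mp hx1
    have : e (c • w) = 0 := hSle hx2
    rw [map_smul, hw, smul_eq_mul, mul_one] at this
    simp [this]
  have hw0 : w ≠ 0 := by rintro rfl; simp at hw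
  have h3 := Submodule.finrank_sup_add_finrank_inf_eq (K ∙ w) (Submodule.span K S)
  rw [show (K ∙ w) ⊓ Submodule.span K S = ⊥ from hinf, finrank_bot, add_zero,
    finrank_span_singleton hw0] at h3
  rw [Submodule.span_insert]
  omega

end

end CRaux

namespace CRaux

noncomputable section
open Submodule Module Set Matrix

lemma finrank_span_singleton_le {K M : Type*} [Field K] [AddCommGroup M] [Module K M]
    (x : M) : finrank K (K ∙ x) ≤ 1 := by
  by_cases h : x = 0
  · subst h; rw [Submodule.span_zero_singleton]; simp
  · rw [finrank_span_singleton h]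

variable {V : Type*} [Fintype V]

lemma mem_ker_resL {C : Set V} {g : V → F2} :
    g ∈ LinearMap.ker (resL C) ↔ ∀ y ∈ C, g y = 0 := by
  constructor
  · intro h y hy
    have := congrFun (LinearMap.mem_ker.mp h) ⟨y, hy⟩
    simpa using this
  · intro h
    rw [LinearMap.mem_ker]
    funext y
    exact h y.1 y.2

lemma sr_symm {M : Matrix V V F2} (hM : Mᵀ = M) (R C : Set V) : sr M R C = sr M C R := by
  letI : Fintype ↥R := (Set.toFinite R).fintype
  letI : Fintype ↥C := (Set.toFinite C).fintype
  rw [← sr_eq_rank, ← sr_eq_rank]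
  have h : M.submatrix (Subtype.val : R → V) (Subtype.val : C → V) =
      (M.submatrix (Subtype.val : C → V) (Subtype.val : R → V))ᵀ := by
    ext x y
    simpa using congrFun (congrFun hM y.1) x.1
  rw [h, Matrix.rank_transpose]

lemma sr_mono {M : Matrix V V F2} {R' R C' C : Set V} (hR : R' ⊆ R) (hC : C' ⊆ C) :
    sr M R' C' ≤ sr M R C := by
  have hres : resL (V := V) C' = (LinearMap.funLeft F2 F2 (Set.inclusion hC)).comp (resL C) := by
    ext g y
    rfl
  calc sr M R' C' = finrank F2 ((rowSp M R').map (resL C')) := rfl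
    _ ≤ finrank F2 ((rowSp M R).map (resL C')) :=
        Submodule.finrank_mono (Submodule.map_mono
          (Submodule.span_mono (Set.image_mono hR)))
    _ = finrank F2 (((rowSp M R).map (resL C)).map (LinearMap.funLeft F2 F2 (Set.inclusion hC))) := by
        rw [hres, Submodule.map_comp]
    _ ≤ sr M R C := Submodule.finrank_map_le _ _

lemma sr_insert_le (M : Matrix V V F2) (w : V) (R C : Set V) :
    sr M (insert w R) C ≤ sr M R C + 1 := by
  have h1 : rowSp M (insert w R) = (F2 ∙ (M w : V → F2)) ⊔ rowSp M R := by
    simp only [rowSp]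
    rw [Set.image_insert_eq, Submodule.span_insert]
  rw [sr, h1, Submodule.map_sup]
  have h2 := Submodule.finrank_sup_add_finrank_inf_eq
    ((F2 ∙ (M w : V → F2)).map (resL C)) ((rowSp M R).map (resL C))
  have h3 : finrank F2 ((F2 ∙ (M w : V → F2)).map (resL C)) ≤ 1 := by
    rw [Submodule.map_span, Set.image_singleton]
    exact finrank_span_singleton_le _
  have h4 : sr M R C = finrank F2 ((rowSp M R).map (resL C)) := rfl
  omega

lemma sr_submod (M : Matrix V V F2) (R₁ C₁ R₂ C₂ : Set V) :
    sr M (R₁ ∩ R₂) (C₁ ∪ C₂) + sr M (R₁ ∪ R₂) (C₁ ∩ C₂) ≤ sr M R₁ C₁ + sr M R₂ C₂ := by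
  set p₁ := rowSp M R₁ with hp₁
  set p₂ := rowSp M R₂ with hp₂
  set k₁ := LinearMap.ker (resL (V := V) C₁) with hk₁
  set k₂ := LinearMap.ker (resL (V := V) C₂) with hk₂
  have hker_union : LinearMap.ker (resL (V := V) (C₁ ∪ C₂)) = k₁ ⊓ k₂ := by
    ext g
    simp only [Submodule.mem_inf, hk₁, hk₂, mem_ker_resL]
    constructor
    · intro h
      exact ⟨fun y hy => h y (Or.inl hy), fun y hy => h y (Or.inr hy)⟩
    · rintro ⟨h1, h2⟩ y (hy | hy)
      · exact h1 y hy
      · exact h2 y hy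
  have hker_inter : k₁ ≤ LinearMap.ker (resL (V := V) (C₁ ∩ C₂)) := by
    intro g hg
    rw [mem_ker_resL]
    intro y hy
    exact mem_ker_resL.mp hg y hy.1
  have hrow_union : rowSp M (R₁ ∪ R₂) = p₁ ⊔ p₂ := by
    simp only [hp₁, hp₂, rowSp, Set.image_union, Submodule.span_union]
  have hrow_inter : rowSp M (R₁ ∩ R₂) ≤ p₁ ⊓ p₂ :=
    le_inf (Submodule.span_mono (Set.image_mono Set.inter_subset_left))
      (Submodule.span_mono (Set.image_mono Set.inter_subset_right))
  -- the four rank-nullity identities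
  have e₁ := finrank_map_add_inf_ker (resL (V := V) C₁) p₁
  have e₂ := finrank_map_add_inf_ker (resL (V := V) C₂) p₂
  have e₃ := finrank_map_add_inf_ker (resL (V := V) (C₁ ∪ C₂)) (p₁ ⊓ p₂)
  have e₄ := finrank_map_add_inf_ker (resL (V := V) (C₁ ∩ C₂)) (p₁ ⊔ p₂)
  rw [← hk₁] at e₁
  rw [← hk₂] at e₂
  have hsum := Submodule.finrank_sup_add_finrank_inf_eq (p₁ ⊓ k₁) (p₂ ⊓ k₂)
  have hUW_inf : (p₁ ⊓ k₁) ⊓ (p₂ ⊓ k₂) = (p₁ ⊓ p₂) ⊓ LinearMap.ker (resL (V := V) (C₁ ∪ C₂)) := by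
    rw [hker_union, inf_inf_inf_comm]
  have hUW_sup : (p₁ ⊓ k₁) ⊔ (p₂ ⊓ k₂) ≤ (p₁ ⊔ p₂) ⊓ LinearMap.ker (resL (V := V) (C₁ ∩ C₂)) :=
    sup_le (le_inf (inf_le_left.trans le_sup_left) (inf_le_right.trans hker_inter))
      (le_inf (inf_le_left.trans le_sup_right)
        (inf_le_right.trans (by
          intro g hg
          rw [mem_ker_resL]
          intro y hy
          exact mem_ker_resL.mp hg y hy.2)))
  have hmono_sup := Submodule.finrank_mono hUW_sup
  have hmono1 : sr M (R₁ ∩ R₂) (C₁ ∪ C₂) ≤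
      finrank F2 (((p₁ ⊓ p₂)).map (resL (C₁ ∪ C₂))) :=
    Submodule.finrank_mono (Submodule.map_mono hrow_inter)
  have hsum2 := Submodule.finrank_sup_add_finrank_inf_eq p₁ p₂
  have h4 : sr M (R₁ ∪ R₂) (C₁ ∩ C₂) = finrank F2 ((p₁ ⊔ p₂).map (resL (C₁ ∩ C₂))) := by
    rw [sr, hrow_union]
  have h5 : sr M R₁ C₁ = finrank F2 (p₁.map (resL C₁)) := rfl
  have h6 : sr M R₂ C₂ = finrank F2 (p₂.map (resL C₂)) := rfl
  rw [hUW_inf] at hsum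
  have hfin : finrank F2 ↥((p₁ ⊓ p₂) ⊓ LinearMap.ker (resL (V := V) (C₁ ∪ C₂))) ≤
      finrank F2 ↥(p₁ ⊓ p₂) := Submodule.finrank_mono inf_le_left
  rw [h4, h5, h6]
  omega

end

end CRaux

namespace CRaux

noncomputable section
open Submodule Module Set Matrix

variable {V : Type*} [Fintype V]

lemma sr_pivot_step {M P : Matrix V V F2} {u v : V} (huv : u ≠ v)
    (hMsymm : Mᵀ = M) (hMvv : M v v = 0) (hMuv : M u v = 1)
    (hP1 : ∀ x y, x ≠ u → x ≠ v → y ≠ u → y ≠ v →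
      P x y = M x y + M u x * M v y + M v x * M u y)
    (hP2 : ∀ y, y ≠ u → y ≠ v → P u y = M v y)
    {Y D : Set V} (huY : u ∈ Y) (hvY : v ∉ Y) (hvD : v ∉ D) (huD : u ∉ D) :
    sr M (insert v Y) (insert v D) = sr P Y D + 1 := by
  have hMsym : ∀ a b, M a b = M b a := fun a b => (congrFun (congrFun hMsymm a) b).symm
  set C : Set V := insert v D with hC
  set q : V → (↥C → F2) := fun x => resL C (M x) with hq
  set s : Set V := insert v (Y \ {u}) with hs
  set h : V → (↥C → F2) := fun x => q x + M x v • q u with hh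
  set vC : ↥C := ⟨v, Set.mem_insert v D⟩ with hvC
  -- Step A+B
  have hset : insert v Y = insert u s := by
    ext x
    simp only [hs, Set.mem_insert_iff, Set.mem_diff, Set.mem_singleton_iff]
    constructor
    · rintro (rfl | hx)
      · exact Or.inr (Or.inl rfl)
      · by_cases hxu : x = u
        · exact Or.inl hxu
        · exact Or.inr (Or.inr ⟨hx, hxu⟩)
    · rintro (rfl | rfl | ⟨hx, _⟩)
      · exact Or.inr huY
      · exact Or.inl rfl
      · exact Or.inr hx
  have stepAB : sr M (insert v Y) C =
      finrank F2 (Submodule.span F2 (insert (q u) (q '' s))) := by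
    rw [sr_eq_span, hset, Set.image_insert_eq]
  -- Step C : replace q-generators by h-generators
  have stepC : Submodule.span F2 (insert (q u) (q '' s)) =
      Submodule.span F2 (insert (q u) (h '' s)) := by
    have := span_insert_add_smul (K := F2) (q u) q (fun x => M x v) s
    rw [hh]
    exact this.symm
  -- Step D : strip q u
  have hq_val : ∀ x (y : ↥C), q x y = M x y.1 := fun x y => rfl
  have hgen0 : ∀ g ∈ h '' s, LinearMap.proj (R := F2) (φ := fun _ : ↥C => F2) vC g = 0 := by
    rintro g ⟨x, hx, rfl⟩
    have : h x vC = M x v + M x v * M u v := by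
      show q x vC + M x v • q u vC = _
      rw [hq_val, hq_val]
      show M x v + M x v * M u v = _
      rfl
    rw [LinearMap.proj_apply]
    rw [this, hMuv, mul_one, CharTwo.add_self_eq_zero]
  have stepD : finrank F2 (Submodule.span F2 (insert (q u) (h '' s))) =
      finrank F2 (Submodule.span F2 (h '' s)) + 1 := by
    apply finrank_span_insert_eval (q u) (h '' s)
      (LinearMap.proj (R := F2) (φ := fun _ : ↥C => F2) vC)
    · rw [LinearMap.proj_apply]
      show M u v = 1
      exact hMuv
    · exact hgen0
  -- Step E : project away the v coordinate
  set π : (↥C → F2) →ₗ[F2] (↥D → F2) :=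
    LinearMap.funLeft F2 F2 (fun y : ↥D => (⟨y.1, Set.mem_insert_of_mem _ y.2⟩ : ↥C)) with hπ
  have hspan_ker : Submodule.span F2 (h '' s) ⊓ LinearMap.ker π = ⊥ := by
    rw [eq_bot_iff]
    rintro g ⟨hg1, hg2⟩
    have hv0 : g vC = 0 := by
      have hle : Submodule.span F2 (h '' s) ≤
          LinearMap.ker (LinearMap.proj (R := F2) (φ := fun _ : ↥C => F2) vC) := by
        rw [Submodule.span_le]
        intro g' hg'
        exact hgen0 g' hg'
      exact hle hg1
    have hD0 : ∀ y : ↥D, g ⟨y.1, Set.mem_insert_of_mem _ y.2⟩ = 0 := by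
      intro y
      exact congrFun (LinearMap.mem_ker.mp hg2) y
    simp only [Submodule.mem_bot]
    funext z
    rcases z with ⟨z, hz⟩
    rcases hz with rfl | hz
    · exact hv0
    · exact hD0 ⟨z, hz⟩
  have stepE : finrank F2 (Submodule.span F2 (h '' s)) =
      finrank F2 (Submodule.span F2 ((fun x => π (h x)) '' s)) := by
    have := finrank_map_add_inf_ker π (Submodule.span F2 (h '' s))
    rw [hspan_ker, finrank_bot, add_zero] at this
    rw [← this, Submodule.map_span, Set.image_image]
  -- Step F : identify with rows of P restricted to D
  set p : V → (↥D → F2) := fun x => resL D (P x) with hp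
  set a : ↥D → F2 := resL D (M v) with ha
  have hπh_v : π (h v) = a := by
    funext y
    show h v (⟨y.1, _⟩ : ↥C) = M v y.1
    simp [hh, hq_val, hMvv]
  have hπh : ∀ x ∈ Y \ {u}, π (h x) = p x + M u x • a := by
    rintro x ⟨hxY, hxu⟩
    have hxu' : x ≠ u := hxu
    have hxv : x ≠ v := fun hxv => hvY (hxv ▸ hxY)
    funext y
    have hyu : y.1 ≠ u := fun hyu => huD (hyu ▸ y.2)
    have hyv : y.1 ≠ v := fun hyv => hvD (hyv ▸ y.2)
    show h x (⟨y.1, _⟩ : ↥C) = p x y + M u x * a y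
    have h1 : h x (⟨y.1, Set.mem_insert_of_mem _ y.2⟩ : ↥C) = M x y.1 + M x v * M u y.1 := by
      simp [hh, hq_val]
    have h2 : p x y = P x y.1 := rfl
    have h3 : a y = M v y.1 := rfl
    rw [h1, h2, h3, hP1 x y.1 hxu' hxv hyu hyv, hMsym x v]
    exact (by decide : ∀ A C B : F2, A + C = A + B + C + B) _ _ _
  -- Step F
  have stepF : Submodule.span F2 ((fun x => π (h x)) '' s) = Submodule.span F2 (p '' Y) := by
    have himg : (fun x => π (h x)) '' s = insert a ((fun x => π (h x)) '' (Y \ {u})) := by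
      rw [hs, Set.image_insert_eq, hπh_v]
    have himg2 : (fun x => π (h x)) '' (Y \ {u}) =
        (fun x => p x + M u x • a) '' (Y \ {u}) := Set.image_congr hπh
    rw [himg, himg2]
    rw [span_insert_add_smul (K := F2) a p (fun x => M u x) (Y \ {u})]
    have hap : a = p u := by
      funext y
      show M v y.1 = P u y.1
      exact (hP2 y.1 (fun hh' => huD (hh' ▸ y.2)) (fun hh' => hvD (hh' ▸ y.2))).symm
    rw [hap, ← Set.image_insert_eq, Set.insert_diff_singleton, Set.insert_eq_self.mpr huY]
  have last : sr P Y D = finrank F2 (Submodule.span F2 (p '' Y)) := by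
    rw [sr_eq_span, hp]
  rw [stepAB, stepC, stepD, stepE, stepF, last]

end

end CRaux

namespace CRaux

noncomputable section
open Submodule Module Set Matrix

variable {V : Type*} [Fintype V]

def adjM (G : SimpleGraph V) : Matrix V V F2 :=
  Matrix.of fun a b =>
    letI : DecidableRel G.Adj := Classical.decRel _
    if G.Adj a b then (1 : F2) else 0

lemma adjM_apply (G : SimpleGraph V) (a b : V) :
    adjM G a b = letI : DecidableRel G.Adj := Classical.decRel _
      if G.Adj a b then (1 : F2) else 0 := rfl

lemma adjM_symm (G : SimpleGraph V) : (adjM G)ᵀ = adjM G := by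
  ext a b
  show adjM G b a = adjM G a b
  by_cases h : G.Adj a b
  · simp [adjM, h, h.symm]
  · have h' : ¬ G.Adj b a := fun hh => h hh.symm
    simp [adjM, h, h']

lemma adjM_diag (G : SimpleGraph V) (x : V) : adjM G x x = 0 := by
  simp [adjM]

lemma localComp_adj (G : SimpleGraph V) (w a b : V) :
    (localComp G w).Adj a b ↔ a ≠ b ∧
      ((G.Adj w a ∧ G.Adj w b ∧ ¬ G.Adj a b) ∨ (¬ (G.Adj w a ∧ G.Adj w b) ∧ G.Adj a b)) :=
  Iff.rfl

lemma adjM_pivot_entry (G : SimpleGraph V) {u v : V} (he : G.Adj u v) {x y : V}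
    (hxu : x ≠ u) (hxv : x ≠ v) (hyu : y ≠ u) (hyv : y ≠ v) :
    adjM (pivot G u v) x y =
      adjM G x y + adjM G u x * adjM G v y + adjM G v x * adjM G u y := by
  classical
  by_cases hxy : x = y
  · subst hxy
    rw [adjM_diag, adjM_diag, zero_add, mul_comm]
    exact (CharTwo.add_self_eq_zero _).symm
  · have hvu : G.Adj v u := he.symm
    have hne : u ≠ v := he.ne
    have c1 : G.Adj x u ↔ G.Adj u x := G.adj_comm x u
    have c2 : G.Adj x v ↔ G.Adj v x := G.adj_comm x v
    have c3 : G.Adj y u ↔ G.Adj u y := G.adj_comm y u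
    have c4 : G.Adj y v ↔ G.Adj v y := G.adj_comm y v
    have c5 : G.Adj y x ↔ G.Adj x y := G.adj_comm y x
    by_cases h1 : G.Adj x y <;> by_cases h2 : G.Adj u x <;> by_cases h3 : G.Adj v x <;>
      by_cases h4 : G.Adj u y <;> by_cases h5 : G.Adj v y <;>
      (try simp only [adjM, Matrix.of_apply, pivot, localComp_adj, c1, c2, c3, c4, c5,
        h1, h2, h3, h4, h5, he, hvu, hne, hxu, hxv, hyu, hyv, hxy,
        Ne.symm hne, Ne.symm hxu, Ne.symm hxv, Ne.symm hyu, Ne.symm hyv, Ne.symm hxy,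
        SimpleGraph.irrefl, ne_eq, not_false_eq_true, not_true_eq_false,
        true_and, and_true, false_and, and_false, true_or, or_true, false_or, or_false,
        not_and, not_or, not_not, iff_true, iff_false, if_true, if_false,
        not_false_iff, and_self, or_self, imp_false, true_implies, false_implies]) <;>
      first
      | rfl
      | decide

lemma adjM_pivot_row_u (G : SimpleGraph V) {u v : V} (he : G.Adj u v) {y : V}
    (hyu : y ≠ u) (hyv : y ≠ v) :
    adjM (pivot G u v) u y = adjM G v y := by
  classical
  have hvu : G.Adj v u := he.symm
  have hne : u ≠ v := he.ne
  have c3 : G.Adj y u ↔ G.Adj u y := G.adj_comm y u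
  have c4 : G.Adj y v ↔ G.Adj v y := G.adj_comm y v
  have c6 : G.Adj v u ↔ G.Adj u v := G.adj_comm v u
  by_cases h4 : G.Adj u y <;> by_cases h5 : G.Adj v y <;>
  (try simp only [adjM, Matrix.of_apply, pivot, localComp_adj, c3, c4, c6,
      h4, h5, he, hvu, hne, hyu, hyv,
      Ne.symm hne, Ne.symm hyu, Ne.symm hyv,
      SimpleGraph.irrefl, ne_eq, not_false_eq_true, not_true_eq_false,
      true_and, and_true, false_and, and_false, true_or, or_true, false_or, or_false,
      not_and, not_or, not_not, iff_true, iff_false, if_true, if_false,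
      not_false_iff, and_self, or_self, imp_false, true_implies, false_implies]) <;>
  first
  | rfl
  | decide

end

end CRaux

namespace CRaux

noncomputable section
open Submodule Module Set Matrix

variable {V : Type*} [Fintype V]

lemma cutRankOn_eq (G : SimpleGraph V) (S X : Set V) :
    cutRankOn G S X = sr (adjM G) (X ∩ S) (S \ X) := by
  unfold cutRankOn
  have hm : (Matrix.of fun (a : ↥(X ∩ S)) (b : ↥(S \ X)) =>
      letI : DecidableRel G.Adj := Classical.decRel _
      if G.Adj a.1 b.1 then (1 : ZMod 2) else 0) =
      (adjM G).submatrix (Subtype.val : ↥(X ∩ S) → V) (Subtype.val : ↥(S \ X) → V) := by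
    ext a b
    by_cases h : G.Adj a.1 b.1 <;> simp [adjM, h]
  rw [hm, sr_eq_rank]

lemma cutRank_eq (G : SimpleGraph V) (X : Set V) :
    cutRank G X = sr (adjM G) X (univ \ X) := by
  rw [cutRank, cutRankOn_eq, Set.inter_univ]

lemma partition_diff {S A B : Set V} (hAB : A ∪ B = S) (hd : Disjoint A B) : S \ A = B := by
  ext z
  constructor
  · rintro ⟨hz, hzA⟩
    rw [← hAB] at hz
    exact hz.resolve_left hzA
  · intro hz
    exact ⟨hAB ▸ Or.inr hz, fun hzA => (Set.disjoint_left.mp hd hzA) hz⟩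

lemma mu_eq (G : SimpleGraph V) {u v : V} (he : G.Adj u v) {X : Set V}
    (hX : X ⊆ ({v}ᶜ : Set V)) :
    sr (adjM G) (insert v X) (insert v ({v}ᶜ \ X)) =
      sr (adjM (pivot G u v)) X ({v}ᶜ \ X) + 1 := by
  have hMsymm := adjM_symm G
  have hPsymm := adjM_symm (pivot G u v)
  have hMvv := adjM_diag G v
  have hMuv : adjM G u v = 1 := by simp [adjM, he]
  have hvX : v ∉ X := fun h => hX h rfl
  have hvD : v ∉ ({v}ᶜ \ X) := fun h => h.1 rfl
  have hP1 : ∀ x y, x ≠ u → x ≠ v → y ≠ u → y ≠ v →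
      adjM (pivot G u v) x y =
        adjM G x y + adjM G u x * adjM G v y + adjM G v x * adjM G u y :=
    fun x y hxu hxv hyu hyv => adjM_pivot_entry G he hxu hxv hyu hyv
  have hP2 : ∀ y, y ≠ u → y ≠ v → adjM (pivot G u v) u y = adjM G v y :=
    fun y hyu hyv => adjM_pivot_row_u G he hyu hyv
  by_cases hu : u ∈ X
  · exact sr_pivot_step he.ne hMsymm hMvv hMuv hP1 hP2 hu hvX hvD (fun hD => hD.2 hu)
  · have huD : u ∈ ({v}ᶜ : Set V) \ X := ⟨he.ne, hu⟩
    have hstep := sr_pivot_step he.ne hMsymm hMvv hMuv hP1 hP2 huD hvD hvX hu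
    calc sr (adjM G) (insert v X) (insert v ({v}ᶜ \ X))
        = sr (adjM G) (insert v ({v}ᶜ \ X)) (insert v X) := sr_symm hMsymm _ _
      _ = sr (adjM (pivot G u v)) ({v}ᶜ \ X) X + 1 := hstep
      _ = sr (adjM (pivot G u v)) X ({v}ᶜ \ X) + 1 := by rw [sr_symm hPsymm]

lemma dom_del (G : SimpleGraph V) (v : V) : Dominates (CR G) (CRdel G v) := by
  refine ⟨Set.subset_univ _, fun X hX => ?_⟩
  show cutRankOn G {v}ᶜ X ≤ cutRank G X
  have hX' : X ⊆ ({v}ᶜ : Set V) := hX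
  rw [cutRankOn_eq, cutRank_eq, Set.inter_eq_self_of_subset_left hX']
  exact sr_mono subset_rfl (Set.diff_subset_diff_left (Set.subset_univ _))

lemma insert_diff_eq {v : V} {X : Set V} (hvX : v ∉ X) :
    insert v (({v}ᶜ : Set V) \ X) = univ \ X := by
  ext z
  simp only [Set.mem_insert_iff, Set.mem_diff, Set.mem_compl_iff, Set.mem_singleton_iff,
    Set.mem_univ, true_and]
  constructor
  · rintro (rfl | ⟨_, hz⟩)
    · exact hvX
    · exact hz
  · intro hz
    by_cases hzv : z = v
    · exact Or.inl hzv
    · exact Or.inr ⟨hzv, hz⟩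

lemma dom_pivot (G : SimpleGraph V) {u v : V} (he : G.Adj u v) :
    Dominates (CR G) (CRdel (pivot G u v) v) := by
  refine ⟨Set.subset_univ _, fun X hX => ?_⟩
  show cutRankOn (pivot G u v) {v}ᶜ X ≤ cutRank G X
  have hX' : X ⊆ ({v}ᶜ : Set V) := hX
  have hvX : v ∉ X := fun h => hX' h rfl
  rw [cutRankOn_eq, cutRank_eq, Set.inter_eq_self_of_subset_left hX']
  have h1 := mu_eq G he hX'
  have h2 := sr_insert_le (adjM G) v X (insert v ({v}ᶜ \ X))
  rw [insert_diff_eq hvX] at h1 h2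
  omega

lemma key_main (G : SimpleGraph V) {u v : V} (he : G.Adj u v) {A B C D : Set V}
    (hAB : A ∪ B = ({v}ᶜ : Set V)) (hABd : Disjoint A B)
    (hCD : C ∪ D = ({v}ᶜ : Set V)) (hCDd : Disjoint C D) :
    sr (adjM G) (A ∩ C) (univ \ (A ∩ C)) + sr (adjM G) (B ∩ D) (univ \ (B ∩ D))
      ≤ sr (adjM G) A B + sr (adjM (pivot G u v)) C D + 1 := by
  have hMsymm := adjM_symm G
  have hA : A ⊆ ({v}ᶜ : Set V) := hAB ▸ Set.subset_union_left
  have hC : C ⊆ ({v}ᶜ : Set V) := hCD ▸ Set.subset_union_left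
  have hB : B ⊆ ({v}ᶜ : Set V) := hAB ▸ Set.subset_union_right
  have hD : D ⊆ ({v}ᶜ : Set V) := hCD ▸ Set.subset_union_right
  have hvA : v ∉ A := fun h => hA h rfl
  have hvB : v ∉ B := fun h => hB h rfl
  have hvC : v ∉ C := fun h => hC h rfl
  have hvD : v ∉ D := fun h => hD h rfl
  have hBeq : ({v}ᶜ : Set V) \ A = B := partition_diff hAB hABd
  have hDeq : ({v}ᶜ : Set V) \ C = D := partition_diff hCD hCDd
  -- μ(C) = sr P C D + 1
  have hmu := mu_eq G he hC
  rw [hDeq] at hmu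
  -- submodularity
  have hsub := sr_submod (adjM G) A B (insert v C) (insert v D)
  rw [hmu] at hsub
  -- set identities
  have e1 : A ∩ insert v C = A ∩ C := by
    ext z
    simp only [Set.mem_inter_iff, Set.mem_insert_iff]
    constructor
    · rintro ⟨hzA, rfl | hzC⟩
      · exact absurd hzA hvA
      · exact ⟨hzA, hzC⟩
    · rintro ⟨hzA, hzC⟩
      exact ⟨hzA, Or.inr hzC⟩
  have e2 : B ∪ insert v D = univ \ (A ∩ C) := by
    ext z
    simp only [Set.mem_union, Set.mem_insert_iff, Set.mem_diff, Set.mem_univ, true_and,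
      Set.mem_inter_iff, not_and]
    constructor
    · rintro (hzB | rfl | hzD) hzA
      · exact absurd hzB (Set.disjoint_left.mp hABd hzA)
      · exact absurd hzA hvA
      · exact Set.disjoint_left.mp hCDd.symm hzD
    · intro hz
      by_cases hzv : z = v
      · exact Or.inr (Or.inl hzv)
      · have hzW : z ∈ ({v}ᶜ : Set V) := hzv
        rw [← hAB] at hzW
        rcases hzW with hzA | hzB
        · have hzC : z ∉ C := hz hzA
          have hzW2 : z ∈ ({v}ᶜ : Set V) := hzv
          rw [← hCD] at hzW2
          exact Or.inr (Or.inr (hzW2.resolve_left hzC))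
        · exact Or.inl hzB
  have e3 : A ∪ insert v C = univ \ (B ∩ D) := by
    ext z
    simp only [Set.mem_union, Set.mem_insert_iff, Set.mem_diff, Set.mem_univ, true_and,
      Set.mem_inter_iff, not_and]
    constructor
    · rintro (hzA | rfl | hzC) hzB
      · exact absurd hzA (Set.disjoint_left.mp hABd.symm hzB)
      · exact absurd hzB hvB
      · exact Set.disjoint_left.mp hCDd hzC
    · intro hz
      by_cases hzv : z = v
      · exact Or.inr (Or.inl hzv)
      · have hzW : z ∈ ({v}ᶜ : Set V) := hzv
        rw [← hAB] at hzW
        rcases hzW with hzA | hzB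
        · exact Or.inl hzA
        · have hzD : z ∉ D := hz hzB
          have hzW2 : z ∈ ({v}ᶜ : Set V) := hzv
          rw [← hCD] at hzW2
          exact Or.inr (Or.inr (hzW2.resolve_right hzD))
  have e4 : B ∩ insert v D = B ∩ D := by
    ext z
    simp only [Set.mem_inter_iff, Set.mem_insert_iff]
    constructor
    · rintro ⟨hzB, rfl | hzD⟩
      · exact absurd hzB hvB
      · exact ⟨hzB, hzD⟩
    · rintro ⟨hzB, hzD⟩
      exact ⟨hzB, Or.inr hzD⟩
  rw [e1, e2, e3, e4] at hsub
  have hflip : sr (adjM G) (univ \ (B ∩ D)) (B ∩ D) =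
      sr (adjM G) (B ∩ D) (univ \ (B ∩ D)) := sr_symm hMsymm _ _
  omega

end

end CRaux


/-- For a vertex `v` of a simple graph `G` and an edge `e = uv`
incident with `v`, at least one of `CR(G - v)` and `CR((G × e) - v)` adheres to
`CR(G)`. -/
theorem stmt8 {V : Type*} [Fintype V] (G : SimpleGraph V) (u v : V) (he : G.Adj u v) :
    Adheres (CRdel G v) (CR G) ∨ Adheres (CRdel (pivot G u v) v) (CR G) := by
  classical
  by_cases hadh : Adheres (CRdel G v) (CR G)
  · exact Or.inl hadh
  right
  refine ⟨CRaux.dom_pivot G he, ?_⟩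
  -- extract a bad partition for CR(G - v)
  have hbad : ∃ A B : Set V, A ∪ B = ({v}ᶜ : Set V) ∧ Disjoint A B ∧
      ∀ X₁ X₂ : Set V, Disjoint X₁ X₂ → (X₁ ∪ X₂ = A ∨ X₁ ∪ X₂ = B) →
        ¬ (cutRank G X₁ ≤ cutRankOn G {v}ᶜ A ∧ cutRank G X₂ ≤ cutRankOn G {v}ᶜ A) := by
    by_contra hcon
    push_neg at hcon
    apply hadh
    refine ⟨CRaux.dom_del G v, ?_⟩
    intro A B hAB hd
    obtain ⟨X₁, X₂, h1, h2, h3⟩ := hcon A B hAB hd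
    exact ⟨X₁, X₂, h1, h2, h3⟩
  obtain ⟨A, B, hAB, hABd, hbadP⟩ := hbad
  intro C D hCD0 hCDd
  have hCD : C ∪ D = ({v}ᶜ : Set V) := hCD0
  have hMsymm := CRaux.adjM_symm G
  have hBeq : ({v}ᶜ : Set V) \ A = B := CRaux.partition_diff hAB hABd
  have hDeq : ({v}ᶜ : Set V) \ C = D := CRaux.partition_diff hCD hCDd
  have hA : A ⊆ ({v}ᶜ : Set V) := hAB ▸ Set.subset_union_left
  have hB : B ⊆ ({v}ᶜ : Set V) := hAB ▸ Set.subset_union_right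
  have hC : C ⊆ ({v}ᶜ : Set V) := hCD ▸ Set.subset_union_left
  have hD : D ⊆ ({v}ᶜ : Set V) := hCD ▸ Set.subset_union_right
  have hkA : cutRankOn G {v}ᶜ A = CRaux.sr (CRaux.adjM G) A B := by
    rw [CRaux.cutRankOn_eq, Set.inter_eq_self_of_subset_left hA, hBeq]
  have hmC : cutRankOn (pivot G u v) {v}ᶜ C = CRaux.sr (CRaux.adjM (pivot G u v)) C D := by
    rw [CRaux.cutRankOn_eq, Set.inter_eq_self_of_subset_left hC, hDeq]
  have hrho : ∀ X : Set V, cutRank G X = CRaux.sr (CRaux.adjM G) X (Set.univ \ X) :=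
    fun X => CRaux.cutRank_eq G X
  -- bad splits of A and B
  have hACu : (A ∩ C) ∪ (A ∩ D) = A := by
    rw [← Set.inter_union_distrib_left, hCD]
    exact Set.inter_eq_self_of_subset_left hA
  have hBCu : (B ∩ C) ∪ (B ∩ D) = B := by
    rw [← Set.inter_union_distrib_left, hCD]
    exact Set.inter_eq_self_of_subset_left hB
  have n1 := hbadP (A ∩ C) (A ∩ D)
    (hCDd.mono Set.inter_subset_right Set.inter_subset_right) (Or.inl hACu)
  have n2 := hbadP (B ∩ C) (B ∩ D)
    (hCDd.mono Set.inter_subset_right Set.inter_subset_right) (Or.inr hBCu)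
  rw [hkA, hrho, hrho] at n1 n2
  -- the two key inequalities
  have i1 := CRaux.key_main G he hAB hABd hCD hCDd
  have hBA : B ∪ A = ({v}ᶜ : Set V) := by rw [Set.union_comm]; exact hAB
  have i2 := CRaux.key_main G he hBA hABd.symm hCD hCDd
  have hsymBA : CRaux.sr (CRaux.adjM G) B A = CRaux.sr (CRaux.adjM G) A B :=
    CRaux.sr_symm hMsymm B A
  rw [hsymBA] at i2
  -- arithmetic
  have hmain :
      (CRaux.sr (CRaux.adjM G) (A ∩ C) (Set.univ \ (A ∩ C)) ≤
          CRaux.sr (CRaux.adjM (pivot G u v)) C D ∧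
        CRaux.sr (CRaux.adjM G) (B ∩ C) (Set.univ \ (B ∩ C)) ≤
          CRaux.sr (CRaux.adjM (pivot G u v)) C D) ∨
      (CRaux.sr (CRaux.adjM G) (A ∩ D) (Set.univ \ (A ∩ D)) ≤
          CRaux.sr (CRaux.adjM (pivot G u v)) C D ∧
        CRaux.sr (CRaux.adjM G) (B ∩ D) (Set.univ \ (B ∩ D)) ≤
          CRaux.sr (CRaux.adjM (pivot G u v)) C D) := by
    omega
  have hCu : (A ∩ C) ∪ (B ∩ C) = C := by
    rw [← Set.union_inter_distrib_right, hAB]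
    exact Set.inter_eq_self_of_subset_right hC
  have hDu : (A ∩ D) ∪ (B ∩ D) = D := by
    rw [← Set.union_inter_distrib_right, hAB]
    exact Set.inter_eq_self_of_subset_right hD
  rcases hmain with ⟨h1, h2⟩ | ⟨h1, h2⟩
  · refine ⟨A ∩ C, B ∩ C, hABd.mono Set.inter_subset_left Set.inter_subset_left,
      Or.inl hCu, ?_, ?_⟩
    · show cutRank G (A ∩ C) ≤ cutRankOn (pivot G u v) {v}ᶜ C
      rw [hrho, hmC]
      exact h1
    · show cutRank G (B ∩ C) ≤ cutRankOn (pivot G u v) {v}ᶜ C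
      rw [hrho, hmC]
      exact h2
  · refine ⟨A ∩ D, B ∩ D, hABd.mono Set.inter_subset_left Set.inter_subset_left,
      Or.inr hDu, ?_, ?_⟩
    · show cutRank G (A ∩ D) ≤ cutRankOn (pivot G u v) {v}ᶜ C
      rw [hrho, hmC]
      exact h1
    · show cutRank G (B ∩ D) ≤ cutRankOn (pivot G u v) {v}ᶜ C
      rw [hrho, hmC]
      exact h2
end
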